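/- arXiv:1908.06823 — 4 statements merged into one kernel-verified Lean document; each statement's English description precedes it below -/
import Mathlib

section
/- Generalized Hopf formula: let F = ⟨f₁⟩ ∗ ⋯ ∗ ⟨f_d⟩ be a free product of cyclic groups (each factor finite cyclic or infinite cyclic), let R be a normal subgroup of F, and let G = F/R. Then the second integral group homology H₂(G;ℤ) is isomorphic to ([F,F] ∩ R)/[R,F]. -/
/-- The free product `⟨f₁⟩ ∗ ⋯ ∗ ⟨f_d⟩` of cyclic groups, the `i`-th factor being cyclic of
order `m i` (with `m i = 0` corresponding to an infinite cyclic factor, since `ZMod 0 = ℤ`). -/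
abbrev FreeProdCyclic {ι : Type*} (m : ι → ℕ) : Type _ :=
  Monoid.CoprodI (fun i : ι => Multiplicative (ZMod (m i)))

/-- The distinguished generator `fᵢ` of the `i`-th cyclic free factor. -/
def cyclicGen {ι : Type*} (m : ι → ℕ) (i : ι) : FreeProdCyclic m :=
  Monoid.CoprodI.of (Multiplicative.ofAdd (1 : ZMod (m i)))

/-- The quotient `([F,F] ⊓ R) / [R,F]` appearing in the Hopf formula. -/
abbrev hopfQuotient {F : Type*} [Group F] (R : Subgroup F) : Type _ :=
  ↥(⁅(⊤ : Subgroup F), (⊤ : Subgroup F)⁆ ⊓ R) ⧸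
    ((⁅R, (⊤ : Subgroup F)⁆).subgroupOf (⁅(⊤ : Subgroup F), (⊤ : Subgroup F)⁆ ⊓ R))

instance hopfQuotient_normal {F : Type*} [Group F] (R : Subgroup F) [R.Normal] :
    ((⁅R, (⊤ : Subgroup F)⁆).subgroupOf
      (⁅(⊤ : Subgroup F), (⊤ : Subgroup F)⁆ ⊓ R)).Normal :=
  Subgroup.Normal.subgroupOf inferInstance _

/-- The second integral homology `H₂(G;ℤ)` of a group `G`, realized via the Hopf formula
`H₂(G;ℤ) ≅ ([F,F] ⊓ R)/[R,F]` applied to the canonical presentation `1 → R → F → G → 1`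
of `G` by the free group `F` on the underlying set of `G` (with projection `F → G`
induced by the identity map, whose kernel is `R`). -/
abbrev H2Z (G : Type*) [Group G] : Type _ :=
  hopfQuotient (MonoidHom.ker (FreeGroup.lift (id : G → G)))


open Subgroup
open scoped commutatorElement IsMulCommutative

variable {L M G P : Type*} [Group L] [Group M] [Group G] [Group P]

lemma mapsCommutatorTop (γ : L →* M) {x : L} (hx : x ∈ ⁅(⊤ : Subgroup L), (⊤ : Subgroup L)⁆) :
    γ x ∈ ⁅(⊤ : Subgroup M), (⊤ : Subgroup M)⁆ := by
  have h : Subgroup.map γ ⁅(⊤ : Subgroup L), (⊤ : Subgroup L)⁆ ≤ ⁅(⊤ : Subgroup M), (⊤ : Subgroup M)⁆ := by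
    rw [Subgroup.map_commutator]
    exact Subgroup.commutator_mono le_top le_top
  exact h ⟨x, hx, rfl⟩

lemma mapsCommutatorSub (γ : L →* M) {S : Subgroup L} {T : Subgroup M}
    (hST : ∀ x ∈ S, γ x ∈ T) {x : L} (hx : x ∈ ⁅S, (⊤ : Subgroup L)⁆) :
    γ x ∈ ⁅T, (⊤ : Subgroup M)⁆ := by
  have h : Subgroup.map γ ⁅S, (⊤ : Subgroup L)⁆ ≤ ⁅T, (⊤ : Subgroup M)⁆ := by
    rw [Subgroup.map_commutator]
    exact Subgroup.commutator_mono (Subgroup.map_le_iff_le_comap.mpr hST) le_top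
  exact h ⟨x, hx, rfl⟩

/-- The restriction of `γ` to a map `[L,L] ⊓ S → [M,M] ⊓ T`. -/
def hopfAux (γ : L →* M) (S : Subgroup L) (T : Subgroup M) (hST : ∀ x ∈ S, γ x ∈ T) :
    ↥(⁅(⊤ : Subgroup L), (⊤ : Subgroup L)⁆ ⊓ S) →*
      ↥(⁅(⊤ : Subgroup M), (⊤ : Subgroup M)⁆ ⊓ T) :=
  (γ.domRestrict _).codRestrict (⁅(⊤ : Subgroup M), (⊤ : Subgroup M)⁆ ⊓ T) fun x =>
    ⟨mapsCommutatorTop γ x.2.1, hST _ x.2.2⟩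

/-- The map induced by `γ` on Hopf quotients. -/
def hopfHom (γ : L →* M) (S : Subgroup L) (T : Subgroup M) [S.Normal] [T.Normal]
    (hST : ∀ x ∈ S, γ x ∈ T) :
    hopfQuotient S →* hopfQuotient T :=
  QuotientGroup.map _ _ (hopfAux γ S T hST) (by
    intro x hx
    rw [Subgroup.mem_subgroupOf] at hx
    rw [Subgroup.mem_comap, Subgroup.mem_subgroupOf]
    exact mapsCommutatorSub γ hST hx)

@[simp] lemma hopfHom_mk (γ : L →* M) (S : Subgroup L) (T : Subgroup M) [S.Normal] [T.Normal]
    (hST : ∀ x ∈ S, γ x ∈ T) (x : ↥(⁅(⊤ : Subgroup L), (⊤ : Subgroup L)⁆ ⊓ S)) :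
    hopfHom γ S T hST (QuotientGroup.mk x) = QuotientGroup.mk (hopfAux γ S T hST x) :=
  rfl

lemma mk_mem_center_of_mem {S : Subgroup M} [S.Normal] {s : M} (hs : s ∈ S) :
    (QuotientGroup.mk s : M ⧸ ⁅S, (⊤ : Subgroup M)⁆) ∈
      Subgroup.center (M ⧸ ⁅S, (⊤ : Subgroup M)⁆) := by
  rw [Subgroup.mem_center_iff]
  intro a
  induction a using QuotientGroup.induction_on with
  | H g =>
    rw [← QuotientGroup.mk_mul, ← QuotientGroup.mk_mul]
    rw [QuotientGroup.eq]
    have : (g * s)⁻¹ * (s * g) = ⁅s⁻¹, g⁻¹⁆ := by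
      simp [commutatorElement_def]; group
    rw [this]
    exact Subgroup.commutator_mem_commutator (inv_mem hs) (Subgroup.mem_top _)

/-- Two lifts of the same map agree on the commutator subgroup, modulo `[ker σ, M]`. -/
lemma lift_commutator_congr (σ : M →* G) (γ δ : L →* M)
    (h : ∀ x, σ (γ x) = σ (δ x)) {x : L}
    (hx : x ∈ ⁅(⊤ : Subgroup L), (⊤ : Subgroup L)⁆) :
    (δ x)⁻¹ * γ x ∈ ⁅σ.ker, (⊤ : Subgroup M)⁆ := by
  set K : Subgroup M := ⁅σ.ker, (⊤ : Subgroup M)⁆ with hK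
  have hker : ∀ a : L, (δ a)⁻¹ * γ a ∈ σ.ker := fun a => by
    rw [MonoidHom.mem_ker, map_mul, map_inv, h a, inv_mul_cancel]
  have hcent : ∀ a : L, (QuotientGroup.mk ((δ a)⁻¹ * γ a) : M ⧸ K) ∈
      Subgroup.center (M ⧸ K) := fun a => mk_mem_center_of_mem (hker a)
  let z : L →* M ⧸ K := MonoidHom.mk'
    (fun a => (QuotientGroup.mk ((δ a)⁻¹ * γ a) : M ⧸ K)) (by
      intro a b
      have hu := Subgroup.mem_center_iff.mp (hcent a)
      calc (QuotientGroup.mk ((δ (a * b))⁻¹ * γ (a * b)) : M ⧸ K)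
          = QuotientGroup.mk ((δ b)⁻¹ * ((δ a)⁻¹ * γ a) * γ b) := by
            rw [map_mul, map_mul, mul_inv_rev]; group
        _ = (QuotientGroup.mk ((δ b)⁻¹ : M) : M ⧸ K) *
              QuotientGroup.mk ((δ a)⁻¹ * γ a) * QuotientGroup.mk (γ b) := by
            rw [← QuotientGroup.mk_mul, ← QuotientGroup.mk_mul]
        _ = QuotientGroup.mk ((δ a)⁻¹ * γ a) *
              ((QuotientGroup.mk ((δ b)⁻¹ : M) : M ⧸ K) * QuotientGroup.mk (γ b)) := by
            rw [hu]; rw [mul_assoc]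
        _ = QuotientGroup.mk ((δ a)⁻¹ * γ a) * QuotientGroup.mk ((δ b)⁻¹ * γ b) := by
            rw [← QuotientGroup.mk_mul])
  have hz : x ∈ z.ker := by
    refine Subgroup.commutator_le.mpr ?_ hx
    intro g₁ _ g₂ _
    rw [MonoidHom.mem_ker, map_commutatorElement]
    exact commutatorElement_eq_one_iff_commute.mpr
      ((Subgroup.mem_center_iff.mp (hcent g₁) (z g₂)).symm)
  have : (QuotientGroup.mk ((δ x)⁻¹ * γ x) : M ⧸ K) = 1 := hz
  exact (QuotientGroup.eq_one_iff _).mp this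

lemma hopfHom_congr_lift (σ : M →* G) (γ δ : L →* M)
    (h : ∀ x, σ (γ x) = σ (δ x)) (S : Subgroup L) [S.Normal]
    (hγ : ∀ x ∈ S, γ x ∈ σ.ker) (hδ : ∀ x ∈ S, δ x ∈ σ.ker) :
    hopfHom γ S σ.ker hγ = hopfHom δ S σ.ker hδ := by
  refine MonoidHom.ext fun a => ?_
  induction a using QuotientGroup.induction_on with
  | H x =>
    rw [hopfHom_mk, hopfHom_mk, QuotientGroup.eq]
    rw [Subgroup.mem_subgroupOf]
    have : (((hopfAux γ S σ.ker hγ x)⁻¹ * hopfAux δ S σ.ker hδ x : _) : M) =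
        (γ (x : L))⁻¹ * δ (x : L) := rfl
    rw [this]
    exact lift_commutator_congr σ δ γ (fun y => (h y).symm) x.2.1

lemma hopfHom_comp (γ : L →* M) (γ' : M →* P) (S : Subgroup L) (T : Subgroup M)
    (U : Subgroup P) [S.Normal] [T.Normal] [U.Normal]
    (hST : ∀ x ∈ S, γ x ∈ T) (hTU : ∀ x ∈ T, γ' x ∈ U) :
    (hopfHom γ' T U hTU).comp (hopfHom γ S T hST) =
      hopfHom (γ'.comp γ) S U (fun x hx => hTU _ (hST _ hx)) := by
  refine MonoidHom.ext fun a => ?_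
  induction a using QuotientGroup.induction_on with
  | H x => rfl

lemma hopfHom_id (S : Subgroup L) [S.Normal] :
    hopfHom (MonoidHom.id L) S S (fun _ hx => hx) = MonoidHom.id _ := by
  refine MonoidHom.ext fun a => ?_
  induction a using QuotientGroup.induction_on with
  | H x => rfl

/-! ### Cyclic group helpers -/

lemma pow_eq_of_zmod_eq {H : Type*} [Group H] {n : ℕ} {g : H} (hg : g ^ n = 1) {a b : ℤ}
    (h : (a : ZMod n) = (b : ZMod n)) : g ^ a = g ^ b := by
  obtain ⟨t, ht⟩ := (ZMod.intCast_eq_intCast_iff a b n).mp h |>.dvd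
  have hb : b = a + n * t := by omega
  rw [hb, zpow_add, zpow_mul, zpow_natCast, hg, one_zpow, mul_one]

/-- The homomorphism `ZMod n → H` sending `1` to an element `g` with `g ^ n = 1`. -/
def zmodHom {H : Type*} [Group H] {n : ℕ} (g : H) (hg : g ^ n = 1) :
    Multiplicative (ZMod n) →* H :=
  MonoidHom.mk' (fun a => g ^ (ZMod.cast a.toAdd : ℤ)) (by
    intro a b
    rw [← zpow_add]
    refine pow_eq_of_zmod_eq hg ?_
    push_cast [ZMod.intCast_zmod_cast]
    rfl)

lemma zmodHom_ofAdd_one {H : Type*} [Group H] {n : ℕ} (g : H) (hg : g ^ n = 1) :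
    zmodHom g hg (Multiplicative.ofAdd (1 : ZMod n)) = g := by
  show g ^ (ZMod.cast ((Multiplicative.ofAdd (1 : ZMod n)).toAdd) : ℤ) = g
  rw [toAdd_ofAdd]
  calc g ^ (ZMod.cast (1 : ZMod n) : ℤ) = g ^ (1 : ℤ) :=
        pow_eq_of_zmod_eq hg (by rw [ZMod.intCast_zmod_cast]; norm_num)
    _ = g := zpow_one g

section FPC

variable {d : ℕ} (m : Fin d → ℕ)

/-- The canonical projection from the free group on `Fin d` onto the free product of
cyclic groups. -/
def fpcProj : FreeGroup (Fin d) →* FreeProdCyclic m :=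
  FreeGroup.lift (cyclicGen m)

lemma fpcProj_of (i : Fin d) : fpcProj m (FreeGroup.of i) = cyclicGen m i := by
  simp [fpcProj]

lemma cyclicGen_zpow (i : Fin d) (k : ℤ) :
    cyclicGen m i ^ k =
      (Monoid.CoprodI.of (M := fun i => Multiplicative (ZMod (m i)))
        (Multiplicative.ofAdd ((k : ZMod (m i)))) : FreeProdCyclic m) := by
  rw [cyclicGen, ← map_zpow]
  congr 1
  rw [← ofAdd_zsmul, zsmul_one]

lemma fpcProj_surjective : Function.Surjective (fpcProj m) := by
  intro y
  induction y using Monoid.CoprodI.induction_on with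
  | one => exact ⟨1, map_one _⟩
  | of i a =>
    refine ⟨FreeGroup.of i ^ (ZMod.cast a.toAdd : ℤ), ?_⟩
    rw [map_zpow, fpcProj_of, cyclicGen_zpow]
    rw [ZMod.intCast_zmod_cast]
    simp
  | mul x y hx hy =>
    obtain ⟨a, rfl⟩ := hx; obtain ⟨b, rfl⟩ := hy
    exact ⟨a * b, map_mul _ _ _⟩

lemma gen_pow_mem_ker (i : Fin d) : FreeGroup.of i ^ (m i) ∈ (fpcProj m).ker := by
  rw [MonoidHom.mem_ker, map_pow, fpcProj_of]
  have : (cyclicGen m i) ^ ((m i : ℤ)) = 1 := by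
    rw [cyclicGen_zpow, Int.cast_natCast, ZMod.natCast_self]
    simp
  rw [← zpow_natCast, this]

lemma ker_fpcProj :
    (fpcProj m).ker = Subgroup.normalClosure (Set.range fun i => FreeGroup.of i ^ (m i)) := by
  refine le_antisymm ?_ (Subgroup.normalClosure_le_normal ?_)
  · set K := Subgroup.normalClosure (Set.range fun i : Fin d => FreeGroup.of i ^ (m i))
    have hgen : ∀ i : Fin d,
        (QuotientGroup.mk (FreeGroup.of i) : FreeGroup (Fin d) ⧸ K) ^ (m i) = 1 := by
      intro i
      rw [← QuotientGroup.mk_pow, QuotientGroup.eq_one_iff]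
      exact Subgroup.subset_normalClosure ⟨i, rfl⟩
    let φ : FreeProdCyclic m →* FreeGroup (Fin d) ⧸ K :=
      Monoid.CoprodI.lift fun i => zmodHom _ (hgen i)
    have hcomp : φ.comp (fpcProj m) = QuotientGroup.mk' K := by
      refine FreeGroup.ext_hom _ _ fun i => ?_
      show φ (fpcProj m (FreeGroup.of i)) = _
      rw [fpcProj_of, cyclicGen]
      show Monoid.CoprodI.lift _ (Monoid.CoprodI.of _) = _
      rw [Monoid.CoprodI.lift_of, zmodHom_ofAdd_one]
      rfl
    intro n hn
    have : (QuotientGroup.mk n : FreeGroup (Fin d) ⧸ K) = 1 := by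
      have h1 : φ (fpcProj m n) = QuotientGroup.mk' K n := by
        rw [← hcomp]; rfl
      rw [MonoidHom.mem_ker.mp hn, map_one] at h1
      exact h1.symm
    exact (QuotientGroup.eq_one_iff _).mp this
  · rintro x ⟨i, rfl⟩
    exact gen_pow_mem_ker m i

end FPC

/-! ### Vanishing of `H₂` for free products of cyclic groups -/

lemma closure_central_normal {M : Type*} [Group M] {s : Set M}
    (hs : s ⊆ Subgroup.center M) : (Subgroup.closure s).Normal := by
  have hle : Subgroup.closure s ≤ Subgroup.center M := (Subgroup.closure_le _).mpr hs
  constructor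
  intro x hx g
  have hcomm := Subgroup.mem_center_iff.mp (hle hx) g
  have hgx : g * x * g⁻¹ = x := by rw [hcomm]; group
  rw [hgx]; exact hx

lemma normalClosure_eq_closure_of_central {M : Type*} [Group M] {s : Set M}
    (hs : s ⊆ Subgroup.center M) : Subgroup.normalClosure s = Subgroup.closure s := by
  have := closure_central_normal hs
  exact le_antisymm (Subgroup.normalClosure_le_normal Subgroup.subset_closure)
    ((Subgroup.closure_le _).mpr Subgroup.subset_normalClosure)

section FPC2

variable {d : ℕ} (m : Fin d → ℕ)

/-- Key lemma: an element of the kernel of the projection onto the free product of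
cyclic groups which is a product of commutators lies in `[N, F]`.  (This is the
vanishing of `H₂` of a free product of cyclic groups, via the Hopf formula.) -/
lemma ker_fpcProj_inter_commutator {n : FreeGroup (Fin d)} (hn : n ∈ (fpcProj m).ker)
    (hc : n ∈ ⁅(⊤ : Subgroup (FreeGroup (Fin d))), (⊤ : Subgroup (FreeGroup (Fin d)))⁆) :
    n ∈ ⁅(fpcProj m).ker, (⊤ : Subgroup (FreeGroup (Fin d)))⁆ := by
  set N : Subgroup (FreeGroup (Fin d)) := (fpcProj m).ker with hN
  set J : Subgroup (FreeGroup (Fin d)) := ⁅N, (⊤ : Subgroup (FreeGroup (Fin d)))⁆ with hJ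
  let p : FreeGroup (Fin d) →* FreeGroup (Fin d) ⧸ J := QuotientGroup.mk' J
  set c : Fin d → FreeGroup (Fin d) ⧸ J := fun i => p (FreeGroup.of i ^ (m i)) with hcdef
  have hc_central : ∀ i, c i ∈ Subgroup.center (FreeGroup (Fin d) ⧸ J) := fun i =>
    mk_mem_center_of_mem (gen_pow_mem_ker m i)
  have hmapN : Subgroup.map p N = Subgroup.closure (Set.range c) := by
    have h1 : Subgroup.map p N =
        Subgroup.normalClosure (⇑p '' Set.range fun i => FreeGroup.of i ^ (m i)) := by
      calc Subgroup.map p N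
          = Subgroup.map p (Subgroup.normalClosure
              (Set.range fun i => FreeGroup.of i ^ (m i))) :=
            congrArg (Subgroup.map p) (ker_fpcProj m)
        _ = _ := Subgroup.map_normalClosure _ _ (QuotientGroup.mk'_surjective J)
    have h2 : (⇑p '' Set.range fun i => FreeGroup.of i ^ (m i)) = Set.range c := by
      rw [← Set.range_comp]; rfl
    rw [h1, h2]
    exact normalClosure_eq_closure_of_central (by rintro x ⟨i, rfl⟩; exact hc_central i)
  set Z := Subgroup.center (FreeGroup (Fin d) ⧸ J) with hZ
  let ch : Fin d → Z := fun i => ⟨c i, hc_central i⟩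
  obtain ⟨k, hk⟩ : ∃ k : Fin d → ℤ, p n = ((∏ i, ch i ^ k i : Z) : FreeGroup (Fin d) ⧸ J) := by
    have hmem : p n ∈ Subgroup.closure (Set.range c) := hmapN ▸ Subgroup.mem_map_of_mem p hn
    refine Subgroup.closure_induction (p := fun x _ => ∃ k : Fin d → ℤ,
        x = ((∏ i, ch i ^ k i : Z) : FreeGroup (Fin d) ⧸ J)) ?_ ?_ ?_ ?_ hmem
    · rintro x ⟨i, rfl⟩
      refine ⟨(Pi.single i 1 : Fin d → ℤ), ?_⟩
      have hprod : (∏ j, ch j ^ (Pi.single i 1 : Fin d → ℤ) j) = ch i := by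
        rw [Fintype.prod_eq_single i fun j hj => by rw [Pi.single_eq_of_ne hj, zpow_zero]]
        simp
      rw [hprod]
    · exact ⟨0, by simp⟩
    · rintro a b _ _ ⟨k, rfl⟩ ⟨l, rfl⟩
      refine ⟨k + l, ?_⟩
      rw [← Subgroup.coe_mul, ← Finset.prod_mul_distrib]
      congr 2
      exact funext fun i => by rw [Pi.add_apply, zpow_add]
    · rintro a _ ⟨k, rfl⟩
      refine ⟨-k, ?_⟩
      rw [← Subgroup.coe_inv, ← Finset.prod_inv_distrib]
      congr 2
      exact funext fun i => by rw [Pi.neg_apply, zpow_neg]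
  have hzero : ∀ i, (m i : ℤ) * k i = 0 := by
    intro i
    let e : FreeGroup (Fin d) →* Multiplicative ℤ :=
      FreeGroup.lift fun j => Multiplicative.ofAdd (if j = i then (1:ℤ) else 0)
    have hJe : ∀ x ∈ J, e x = 1 := by
      intro x hx
      have hxc : x ∈ commutator (FreeGroup (Fin d)) :=
        Subgroup.commutator_mono le_top le_top hx
      exact Abelianization.commutator_subset_ker e hxc
    let eb : FreeGroup (Fin d) ⧸ J →* Multiplicative ℤ := QuotientGroup.lift J e hJe
    have h1 : eb (p n) = 1 := Abelianization.commutator_subset_ker e hc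
    have hcj : ∀ j, eb (c j) = Multiplicative.ofAdd ((m j : ℤ) * (if j = i then 1 else 0)) := by
      intro j
      have : eb (c j) = e (FreeGroup.of j ^ (m j)) := rfl
      rw [this, map_pow, FreeGroup.lift_apply_of, ← ofAdd_nsmul, nsmul_eq_mul]
    have h2 : eb (p n) = Multiplicative.ofAdd ((m i : ℤ) * k i) := by
      rw [hk]
      have : ((∏ j, ch j ^ k j : Z) : FreeGroup (Fin d) ⧸ J) = Z.subtype (∏ j, ch j ^ k j) :=
        rfl
      rw [this, ← MonoidHom.comp_apply, map_prod]
      have hterm : ∀ j, (eb.comp Z.subtype) (ch j ^ k j) =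
          Multiplicative.ofAdd (((m j : ℤ) * (if j = i then 1 else 0)) * k j) := by
        intro j
        rw [map_zpow]
        have : (eb.comp Z.subtype) (ch j) = eb (c j) := rfl
        rw [this, hcj j, ← ofAdd_zsmul, zsmul_eq_mul]
        congr 1
        push_cast
        ring
      rw [Finset.prod_congr rfl fun j _ => hterm j, ← ofAdd_sum]
      congr 1
      rw [Finset.sum_eq_single i]
      · simp
      · intro j _ hj; simp [hj]
      · intro h; exact absurd (Finset.mem_univ i) h
    have h3 := h2.symm.trans h1
    have h4 := congrArg Multiplicative.toAdd h3
    simpa [-mul_eq_zero, mul_comm] using h4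
  have hfac : ∀ i, ch i ^ k i = 1 := by
    intro i
    have hcoe : ((ch i ^ k i : Z) : FreeGroup (Fin d) ⧸ J) = (c i) ^ (k i) := rfl
    have hone : (FreeGroup.of i ^ (m i) : FreeGroup (Fin d)) ^ (k i) = 1 := by
      rw [← zpow_natCast, ← zpow_mul, hzero i, zpow_zero]
    have : (c i) ^ (k i) = 1 := by
      rw [hcdef, ← map_zpow, hone, map_one]
    exact Subtype.ext (by rw [hcoe, this]; rfl)
  have hp1 : p n = 1 := by
    rw [hk, Finset.prod_congr rfl fun i _ => hfac i]
    simp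
  exact (QuotientGroup.eq_one_iff _).mp hp1

end FPC2

/-!
STATEMENT 1 (Generalized Hopf formula): let `F = ⟨f₁⟩ ∗ ⋯ ∗ ⟨f_d⟩` be a free product of
cyclic groups (each factor finite cyclic or infinite cyclic), let `R` be a normal subgroup
of `F`, and let `G = F/R`.  Then the second integral group homology `H₂(G;ℤ)` is isomorphic
to `([F,F] ∩ R)/[R,F]`.
-/
theorem generalized_hopf_formula {d : ℕ} (m : Fin d → ℕ)
    (R : Subgroup (FreeProdCyclic m)) [R.Normal] :
    Nonempty (H2Z (FreeProdCyclic m ⧸ R) ≃* hopfQuotient R) := by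
  classical
  let G := FreeProdCyclic m ⧸ R
  let πF : FreeProdCyclic m →* G := QuotientGroup.mk' R
  let πL : FreeGroup G →* G := FreeGroup.lift (id : G → G)
  let π2 : FreeGroup (Fin d) →* G := πF.comp (fpcProj m)
  have hπ2surj : Function.Surjective π2 :=
    (QuotientGroup.mk'_surjective R).comp (fpcProj_surjective m)
  -- the two lifts between the free group on `G` and the free group on `Fin d`
  let α : FreeGroup G →* FreeGroup (Fin d) :=
    FreeGroup.lift fun g => (hπ2surj g).choose
  have hπLof : ∀ g : G, πL (FreeGroup.of g) = g := fun g => FreeGroup.lift_apply_of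
  have hα : ∀ x, π2 (α x) = πL x := by
    have h : π2.comp α = πL := by
      refine FreeGroup.ext_hom _ _ fun g => ?_
      show π2 (α (FreeGroup.of g)) = πL (FreeGroup.of g)
      rw [show α (FreeGroup.of g) = (hπ2surj g).choose from FreeGroup.lift_apply_of,
        (hπ2surj g).choose_spec, hπLof]
    exact fun x => by rw [← h]; rfl
  let β : FreeGroup (Fin d) →* FreeGroup G :=
    FreeGroup.lift fun i => FreeGroup.of (π2 (FreeGroup.of i))
  have hβ : ∀ x, πL (β x) = π2 x := by
    have h : πL.comp β = π2 := by
      refine FreeGroup.ext_hom _ _ fun i => ?_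
      show πL (β (FreeGroup.of i)) = π2 (FreeGroup.of i)
      rw [show β (FreeGroup.of i) = FreeGroup.of (π2 (FreeGroup.of i)) from FreeGroup.lift_apply_of,
        hπLof]
    exact fun x => by rw [← h]; rfl
  have hαS : ∀ x ∈ πL.ker, α x ∈ π2.ker := fun x hx => by
    rw [MonoidHom.mem_ker, hα]; exact hx
  have hβS : ∀ x ∈ π2.ker, β x ∈ πL.ker := fun x hx => by
    rw [MonoidHom.mem_ker, hβ]; exact hx
  -- the equivalence between the two free presentations
  let f1 := hopfHom α πL.ker π2.ker hαS
  let f2 := hopfHom β π2.ker πL.ker hβS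
  have h21 : f2.comp f1 = MonoidHom.id _ := by
    calc f2.comp f1
        = hopfHom (β.comp α) πL.ker πL.ker (fun x hx => hβS _ (hαS _ hx)) :=
          hopfHom_comp α β πL.ker π2.ker πL.ker hαS hβS
      _ = hopfHom (MonoidHom.id _) πL.ker πL.ker (fun _ hx => hx) :=
          hopfHom_congr_lift πL (β.comp α) (MonoidHom.id _)
            (fun x => by show πL (β (α x)) = πL x; rw [hβ, hα])
            πL.ker (fun x hx => hβS _ (hαS _ hx)) (fun _ hx => hx)
      _ = MonoidHom.id _ := hopfHom_id _
  have h12 : f1.comp f2 = MonoidHom.id _ := by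
    calc f1.comp f2
        = hopfHom (α.comp β) π2.ker π2.ker (fun x hx => hαS _ (hβS _ hx)) :=
          hopfHom_comp β α π2.ker πL.ker π2.ker hβS hαS
      _ = hopfHom (MonoidHom.id _) π2.ker π2.ker (fun _ hx => hx) :=
          hopfHom_congr_lift π2 (α.comp β) (MonoidHom.id _)
            (fun x => by show π2 (α (β x)) = π2 x; rw [hα, hβ])
            π2.ker (fun x hx => hαS _ (hβS _ hx)) (fun _ hx => hx)
      _ = MonoidHom.id _ := hopfHom_id _
  let E1 : hopfQuotient πL.ker ≃* hopfQuotient π2.ker :=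
    MonoidHom.toMulEquiv f1 f2 h21 h12
  -- the map from the presentation by the free group on `Fin d` down to the
  -- presentation by the free product of cyclic groups
  have hker2 : π2.ker = Subgroup.comap (fpcProj m) R := by
    show (πF.comp (fpcProj m)).ker = _
    rw [← MonoidHom.comap_ker]
    congr 1
    exact QuotientGroup.ker_mk' R
  have hq : ∀ x ∈ π2.ker, fpcProj m x ∈ R := fun x hx => by
    rw [hker2] at hx; exact hx
  let f3 := hopfHom (fpcProj m) π2.ker R hq
  have hkerle : (fpcProj m).ker ≤ π2.ker := by
    rw [hker2]
    intro z hz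
    rw [Subgroup.mem_comap, MonoidHom.mem_ker.mp hz]
    exact one_mem R
  have hsurj3 : Function.Surjective f3 := by
    intro y
    induction y using QuotientGroup.induction_on with
    | H yy =>
      have h1 : (yy : FreeProdCyclic m) ∈ Subgroup.map (fpcProj m)
          ⁅(⊤ : Subgroup (FreeGroup (Fin d))), (⊤ : Subgroup (FreeGroup (Fin d)))⁆ := by
        rw [Subgroup.map_commutator,
          Subgroup.map_top_of_surjective _ (fpcProj_surjective m)]
        exact yy.2.1
      obtain ⟨x, hx, hqx⟩ := h1
      have hx2 : x ∈ π2.ker := by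
        rw [hker2, Subgroup.mem_comap, hqx]
        exact yy.2.2
      refine ⟨QuotientGroup.mk ⟨x, hx, hx2⟩, ?_⟩
      rw [hopfHom_mk]
      congr 1
      exact Subtype.ext hqx
  have hinj3 : Function.Injective f3 := by
    refine (injective_iff_map_eq_one f3).mpr fun a => ?_
    induction a using QuotientGroup.induction_on with
    | H x =>
      intro ha
      rw [hopfHom_mk, QuotientGroup.eq_one_iff, Subgroup.mem_subgroupOf] at ha
      have hmapR : Subgroup.map (fpcProj m)
          ⁅π2.ker, (⊤ : Subgroup (FreeGroup (Fin d)))⁆ = ⁅R, (⊤ : Subgroup (FreeProdCyclic m))⁆ := by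
        rw [Subgroup.map_commutator,
          Subgroup.map_top_of_surjective _ (fpcProj_surjective m)]
        congr 1
        rw [hker2, Subgroup.map_comap_eq_self_of_surjective (fpcProj_surjective m)]
      rw [← hmapR] at ha
      obtain ⟨cc, hcc, hccx⟩ := ha
      have hk1 : (x : FreeGroup (Fin d)) * cc⁻¹ ∈ (fpcProj m).ker := by
        rw [MonoidHom.mem_ker, map_mul, map_inv, hccx]
        exact mul_inv_cancel _
      have hk2 : (x : FreeGroup (Fin d)) * cc⁻¹ ∈
          ⁅(⊤ : Subgroup (FreeGroup (Fin d))), (⊤ : Subgroup (FreeGroup (Fin d)))⁆ :=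
        mul_mem x.2.1 (inv_mem (Subgroup.commutator_mono le_top le_top hcc))
      have hk3 := ker_fpcProj_inter_commutator m hk1 hk2
      have hle : ⁅(fpcProj m).ker, (⊤ : Subgroup (FreeGroup (Fin d)))⁆ ≤
          ⁅π2.ker, (⊤ : Subgroup (FreeGroup (Fin d)))⁆ :=
        Subgroup.commutator_mono hkerle le_top
      have hxmem : (x : FreeGroup (Fin d)) ∈ ⁅π2.ker, (⊤ : Subgroup (FreeGroup (Fin d)))⁆ := by
        have hdec : (x : FreeGroup (Fin d)) = ((x : FreeGroup (Fin d)) * cc⁻¹) * cc := by group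
        rw [hdec]
        exact mul_mem (hle hk3) hcc
      rw [QuotientGroup.eq_one_iff, Subgroup.mem_subgroupOf]
      exact hxmem
  exact ⟨E1.trans (MulEquiv.ofBijective f3 ⟨hinj3, hsurj3⟩)⟩
end

section
/- Let 1 → R → F →π→ G → 1 be a periodic presentation of a finite group G, with periods m₁, …, m_d, and let p be a prime. Then the periodic cover E = F/[R,F] is a p-group if and only if G is a p-group and every period m_i is a power of p. -/
/-! ### Auxiliary material -/

section Aux

variable {d : ℕ} (m : Fin d → ℕ)

lemma ofAdd_one_pow (n : ℕ) : (Multiplicative.ofAdd (1 : ZMod n)) ^ n = 1 := by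
  rw [← ofAdd_nsmul]
  simp [nsmul_eq_mul, ZMod.natCast_self]

lemma cyclicGen_pow (i : Fin d) : (cyclicGen m i) ^ (m i) = 1 := by
  rw [cyclicGen, ← map_pow, ofAdd_one_pow, map_one]

/-- The canonical map from the free product of cyclic groups to the direct product. -/
def toPiCyclic : FreeProdCyclic m →* (∀ i, Multiplicative (ZMod (m i))) :=
  Monoid.CoprodI.lift fun i => MonoidHom.mulSingle (fun i => Multiplicative (ZMod (m i))) i

lemma toPiCyclic_of (i : Fin d) (x : Multiplicative (ZMod (m i))) :
    toPiCyclic m (Monoid.CoprodI.of x) = Pi.mulSingle i x := by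
  simp [toPiCyclic]

/-- Two monoid homs out of `Multiplicative (ZMod n)` agreeing on `ofAdd 1` are equal. -/
lemma monoidHom_ext_zmod {n : ℕ} {N : Type*} [Group N]
    {f g : Multiplicative (ZMod n) →* N}
    (h : f (Multiplicative.ofAdd 1) = g (Multiplicative.ofAdd 1)) : f = g := by
  refine MonoidHom.ext fun x => ?_
  obtain ⟨k, hk⟩ := ZMod.intCast_surjective (Multiplicative.toAdd x)
  have hx : x = (Multiplicative.ofAdd (1 : ZMod n)) ^ k := by
    rw [← ofAdd_zsmul]
    simp only [zsmul_eq_mul, mul_one]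
    rw [hk]
    rfl
  rw [hx, map_zpow, map_zpow, h]

/-- The coordinate homomorphism back from a cyclic factor into the abelianization. -/
noncomputable def psiAux (i : Fin d) :
    Multiplicative (ZMod (m i)) →* Abelianization (FreeProdCyclic m) :=
  AddMonoidHom.toMultiplicativeLeft
    (ZMod.lift (m i)
      ⟨zmultiplesHom _ (Additive.ofMul (Abelianization.of (cyclicGen m i))), by
        simp only [zmultiplesHom_apply]
        rw [← ofMul_zpow, zpow_natCast, ← map_pow, cyclicGen_pow, map_one, ofMul_one]⟩)

lemma psiAux_apply (i : Fin d) :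
    psiAux m i (Multiplicative.ofAdd 1) = Abelianization.of (cyclicGen m i) := by
  have h1 : ((1 : ℤ) : ZMod (m i)) = (1 : ZMod (m i)) := by norm_cast
  simp only [psiAux, AddMonoidHom.toMultiplicativeLeft_apply_apply]
  rw [show (Multiplicative.ofAdd (1 : ZMod (m i))).toAdd = (((1:ℤ) : ZMod (m i))) by
    simpa using h1.symm]
  rw [ZMod.lift_coe]
  simp [zmultiplesHom_apply]

/-- Key lemma: the kernel of the map to the direct product is the commutator subgroup. -/
lemma ker_toPiCyclic_le :
    (toPiCyclic m).ker ≤ commutator (FreeProdCyclic m) := by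
  classical
  set ψ : (∀ i, Multiplicative (ZMod (m i))) →* Abelianization (FreeProdCyclic m) :=
    MonoidHom.noncommPiCoprod (psiAux m)
      (Pairwise.mono (r := fun i j => i ≠ j) (fun _ _ h => h) fun i j _ x y => Commute.all _ _) with hψ
  have hcomp : ψ.comp (toPiCyclic m) = Abelianization.of := by
    apply Monoid.CoprodI.ext_hom
    intro i
    apply monoidHom_ext_zmod
    simp only [MonoidHom.comp_apply]
    rw [toPiCyclic_of, hψ, MonoidHom.noncommPiCoprod_mulSingle, psiAux_apply]
    rfl
  intro x hx
  have h1 : Abelianization.of x = 1 := by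
    rw [← hcomp, MonoidHom.comp_apply, MonoidHom.mem_ker.mp hx, map_one]
  exact (QuotientGroup.eq_one_iff x).mp h1

end Aux

/-!
STATEMENT 5: Let `1 → R → F →π→ G → 1` be a periodic presentation of a finite group `G`,
with (finite, nonzero) periods `m₁, …, m_d`, and let `p` be a prime.  Then the periodic
cover `E = F/[R,F]` is a `p`-group if and only if `G` is a `p`-group and every period `mᵢ`
is a power of `p`.
-/
theorem periodic_cover_isPGroup_iff {d : ℕ} (m : Fin d → ℕ) (hm : ∀ i, m i ≠ 0)
    {G : Type*} [Group G] [Finite G] (p : ℕ) (hp : p.Prime)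
    (π : FreeProdCyclic m →* G) (hsurj : Function.Surjective π) :
    IsPGroup p (FreeProdCyclic m ⧸ ⁅π.ker, (⊤ : Subgroup (FreeProdCyclic m))⁆) ↔
      (IsPGroup p G ∧ ∀ i, ∃ k : ℕ, m i = p ^ k) := by
  classical
  haveI : Fact p.Prime := ⟨hp⟩
  set F := FreeProdCyclic m
  set N : Subgroup F := ⁅π.ker, (⊤ : Subgroup F)⁆ with hNdef
  have hNker : N ≤ π.ker := Subgroup.commutator_le_left _ _
  have hNcomm : N ≤ commutator F := Subgroup.commutator_mono le_top le_top
  have hNphi : N ≤ (toPiCyclic m).ker :=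
    le_trans hNcomm (Abelianization.commutator_subset_ker (toPiCyclic m))
  let mk : F →* F ⧸ N := QuotientGroup.mk' N
  have hmksurj : Function.Surjective mk := QuotientGroup.mk'_surjective N
  let πbar : F ⧸ N →* G :=
    QuotientGroup.lift N π (fun x hx => MonoidHom.mem_ker.mp (hNker hx))
  let φbar : F ⧸ N →* (∀ i, Multiplicative (ZMod (m i))) :=
    QuotientGroup.lift N (toPiCyclic m) (fun x hx => MonoidHom.mem_ker.mp (hNphi hx))
  have hπbar : ∀ x : F, πbar (mk x) = π x := fun x => rfl
  have hφbar : ∀ x : F, φbar (mk x) = toPiCyclic m x := fun x => rfl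
  have hπbarsurj : Function.Surjective πbar := fun g => by
    obtain ⟨x, hx⟩ := hsurj g; exact ⟨mk x, hx⟩
  constructor
  · intro hE
    constructor
    · exact hE.of_surjective πbar hπbarsurj
    · intro i
      obtain ⟨k, hk⟩ := hE (mk (cyclicGen m i))
      have h1 : (toPiCyclic m (cyclicGen m i)) ^ p ^ k = 1 := by
        rw [← hφbar, ← map_pow, hk, map_one]
      have h2 : (Multiplicative.ofAdd (1 : ZMod (m i))) ^ p ^ k = 1 := by
        have h1' : (Pi.mulSingle i (Multiplicative.ofAdd (1 : ZMod (m i))) : ∀ j, Multiplicative (ZMod (m j))) ^ p ^ k = 1 := by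
          rw [← toPiCyclic_of m i]
          exact h1
        have h1'' := congrFun h1' i
        simpa using h1''
      have h3 : orderOf (Multiplicative.ofAdd (1 : ZMod (m i))) ∣ p ^ k :=
        orderOf_dvd_of_pow_eq_one h2
      rw [orderOf_ofAdd_eq_addOrderOf, ZMod.addOrderOf_one] at h3
      obtain ⟨j, _, hj⟩ := (Nat.dvd_prime_pow hp).mp h3
      exact ⟨j, hj⟩
  · rintro ⟨hG, hper⟩
    -- The direct product of the cyclic factors is a p-group.
    choose k hk using hper
    have hPi : IsPGroup p (∀ i, Multiplicative (ZMod (m i))) := by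
      apply IsPGroup.of_card (n := ∑ i, k i)
      rw [Nat.card_pi]
      have hcard : ∀ i : Fin d, Nat.card (Multiplicative (ZMod (m i))) = p ^ k i := by
        intro i
        rw [Nat.card_congr Multiplicative.toAdd, Nat.card_zmod, hk]
      simp only [hcard]
      rw [Finset.prod_pow_eq_pow_sum]
    -- the kernel of πbar is central
    have hker_central : MonoidHom.ker πbar ≤ Subgroup.center (F ⧸ N) := by
      intro e he
      obtain ⟨x, rfl⟩ := hmksurj e
      have hx : x ∈ π.ker := by
        rw [MonoidHom.mem_ker] at he ⊢
        rw [← hπbar x]; exact he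
      rw [Subgroup.mem_center_iff]
      intro g
      obtain ⟨y, rfl⟩ := hmksurj g
      open scoped commutatorElement in
      have hcomm : ⁅x, y⁆ ∈ N :=
        Subgroup.commutator_mem_commutator hx (Subgroup.mem_top y)
      open scoped commutatorElement in
      have h1 : ⁅mk x, mk y⁆ = 1 := by
        rw [← map_commutatorElement]
        exact (QuotientGroup.eq_one_iff _).mpr hcomm
      have h2 : Commute (mk x) (mk y) := commutatorElement_eq_one_iff_commute.mp h1
      exact h2.symm.eq
    -- hence the center has p-power index
    obtain ⟨s, hs⟩ := hG.exists_card_eq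
    have hindexker : (MonoidHom.ker πbar).index = p ^ s := by
      rw [Subgroup.index_ker, MonoidHom.range_eq_top.mpr hπbarsurj, ← hs]
      exact Nat.card_congr Subgroup.topEquiv.toEquiv
    haveI hfinker : (MonoidHom.ker πbar).FiniteIndex :=
      ⟨by rw [hindexker]; exact pow_ne_zero _ hp.ne_zero⟩
    haveI hfin : (Subgroup.center (F ⧸ N)).FiniteIndex :=
      Subgroup.finiteIndex_of_le hker_central
    have hdvd : (Subgroup.center (F ⧸ N)).index ∣ p ^ s := by
      rw [← hindexker]
      exact Subgroup.index_dvd_of_le hker_central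
    obtain ⟨t, _, ht⟩ := (Nat.dvd_prime_pow hp).mp hdvd
    -- now prove every element has p-power order
    intro e
    obtain ⟨b, hb⟩ := hPi (φbar e)
    obtain ⟨x, hx⟩ := hmksurj (e ^ p ^ b)
    have hx1 : toPiCyclic m x = 1 := by
      rw [← hφbar, hx, map_pow, hb]
    have hxc : x ∈ commutator F := ker_toPiCyclic_le m (MonoidHom.mem_ker.mpr hx1)
    have hec : e ^ p ^ b ∈ commutator (F ⧸ N) := by
      rw [← hx]
      have hle : (commutator F).map mk ≤ commutator (F ⧸ N) := by
        rw [commutator_def, commutator_def, Subgroup.map_commutator]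
        exact Subgroup.commutator_mono le_top le_top
      exact hle (Subgroup.mem_map_of_mem mk hxc)
    open scoped IsMulCommutative in
    have h1 : MonoidHom.transferCenterPow (F ⧸ N) (e ^ p ^ b) = 1 :=
      MonoidHom.mem_ker.mp
        (Abelianization.commutator_subset_ker (MonoidHom.transferCenterPow (F ⧸ N)) hec)
    have h2 : (e ^ p ^ b) ^ (Subgroup.center (F ⧸ N)).index = 1 := by
      have := congrArg Subtype.val h1
      rwa [MonoidHom.transferCenterPow_apply] at this
    refine ⟨b + t, ?_⟩
    rw [pow_add, pow_mul]
    rw [ht] at h2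
    exact h2
end

section
/- Locally unitary covers have minimal exponent: let G be a finite group, let 1 → R → F →π→ G → 1 be a locally unitary presentation, and let E = F/[R,F]. Then for every finite central extension 1 → A → E' → G → 1 with [E',E'] ∩ A isomorphic to H₂(G;ℤ) (i.e., for every cover E' of G), the exponent of E is at most the exponent of E'. -/
section ExponentAux

open Subgroup
open scoped commutatorElement

/-- Exponent sum of the generator `i` in a free group word. -/
def expv {ι : Type*} [DecidableEq ι] (i : ι) : FreeGroup ι →* Multiplicative ℤ :=
  FreeGroup.lift (fun j => Multiplicative.ofAdd (if j = i then (1 : ℤ) else 0))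

lemma expv_of {ι : Type*} [DecidableEq ι] (i j : ι) :
    Multiplicative.toAdd (expv i (FreeGroup.of j)) = if j = i then (1 : ℤ) else 0 := by
  simp [expv]

lemma aux_ab {d : ℕ} (x : FreeGroup (Fin d)) :
    Abelianization.of x
      = ∏ i : Fin d, (Abelianization.of (FreeGroup.of i)) ^ (Multiplicative.toAdd (expv i x)) := by
  induction x using FreeGroup.induction_on with
  | C1 => simp
  | of j =>
      have hp : (pure j : FreeGroup (Fin d)) = FreeGroup.of j := rfl
      rw [Finset.prod_eq_single j]
      · simp [expv_of]
      · intro i _ hij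
        rw [expv_of]
        simp [Ne.symm hij]
      · simp
  | inv_of j ih =>
      have hp : (pure j : FreeGroup (Fin d)) = FreeGroup.of j := rfl
      rw [map_inv, ih]
      rw [← Finset.prod_inv_distrib]
      apply Finset.prod_congr rfl
      intro i _
      rw [map_inv, toAdd_inv, zpow_neg]
  | mul x y hx hy =>
      rw [map_mul, hx, hy, ← Finset.prod_mul_distrib]
      apply Finset.prod_congr rfl
      intro i _
      rw [map_mul, toAdd_mul, zpow_add]


/-- If `q ∘ η` differs from `q` pointwise by central elements, then `q ∘ η = q`
on the commutator subgroup. -/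
lemma aux_center_eq_on_commutator {F Q : Type*} [Group F] [Group Q]
    (q : F →* Q) (η : F →* F)
    (hc : ∀ x : F, q (η x) * (q x)⁻¹ ∈ Subgroup.center Q) :
    ∀ c ∈ ⁅(⊤ : Subgroup F), (⊤ : Subgroup F)⁆, q (η c) = q c := by
  have hmul : ∀ x y : F,
      q (η (x * y)) * (q (x * y))⁻¹ = (q (η x) * (q x)⁻¹) * (q (η y) * (q y)⁻¹) := by
    intro x y
    have hy := Subgroup.mem_center_iff.mp (hc y) (q x)⁻¹
    calc q (η (x * y)) * (q (x * y))⁻¹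
        = q (η x) * ((q (η y) * (q y)⁻¹) * (q x)⁻¹) := by
          simp only [map_mul, mul_inv_rev]; group
      _ = q (η x) * ((q x)⁻¹ * (q (η y) * (q y)⁻¹)) := by rw [hy]
      _ = (q (η x) * (q x)⁻¹) * (q (η y) * (q y)⁻¹) := by group
  let δ : F →* Q := MonoidHom.mk' (fun x => q (η x) * (q x)⁻¹) hmul
  have hker : ⁅(⊤ : Subgroup F), (⊤ : Subgroup F)⁆ ≤ δ.ker := by
    rw [Subgroup.commutator_le]
    intro g₁ _ g₂ _
    have hcomm : Commute (δ g₁) (δ g₂) :=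
      (Subgroup.mem_center_iff.mp (hc g₁) (δ g₂)).symm
    rw [MonoidHom.mem_ker, map_commutatorElement]
    exact commutatorElement_eq_one_iff_commute.mpr hcomm
  intro c hcmem
  have h1 : δ c = 1 := hker hcmem
  have : q (η c) * (q c)⁻¹ = 1 := h1
  rw [mul_inv_eq_one] at this
  exact this

/-- Multiplying entries by central elements does not change a commutator. -/
lemma aux_commutator_center {E : Type*} [Group E] (u s z w : E)
    (hz : z ∈ Subgroup.center E) (hw : w ∈ Subgroup.center E) :
    ⁅u * z, s * w⁆ = ⁅u, s⁆ := by
  have hz' := Subgroup.mem_center_iff.mp hz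
  have hw' := Subgroup.mem_center_iff.mp hw
  have hzc : ∀ a b : E, z * (a * b) = a * (z * b) := fun a b => by
    rw [← mul_assoc, ← hz' a, mul_assoc]
  have hwc : ∀ a b : E, w * (a * b) = a * (w * b) := fun a b => by
    rw [← mul_assoc, ← hw' a, mul_assoc]
  simp only [commutatorElement_def, mul_inv_rev, mul_assoc]
  rw [hzc, hzc, mul_inv_cancel_left, hwc, mul_inv_cancel_left]

end ExponentAux

open Subgroup
open scoped commutatorElement

/-!
STATEMENT 8 (Locally unitary covers have minimal exponent): let `G` be a finite group, let
`1 → R → F →π→ G → 1` be a locally unitary presentation (i.e. `π` preserves the orders of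
the distinguished generators: `o(π(fᵢ)) = mᵢ`), and let `E = F/[R,F]`.  Then for every
finite central extension `1 → A → E' → G → 1` with `[E',E'] ∩ A` isomorphic to `H₂(G;ℤ)`
(i.e. for every cover `E'` of `G`), the exponent of `E` is at most the exponent of `E'`.
-/
theorem locally_unitary_cover_minimal_exponent {d : ℕ} (m : Fin d → ℕ)
    {G : Type*} [Group G] [Finite G]
    (π : FreeProdCyclic m →* G) (hsurj : Function.Surjective π)
    (hlu : ∀ i, orderOf (π (cyclicGen m i)) = m i)
    (E' : Type*) [Group E'] [Finite E'] (π' : E' →* G) (hsurj' : Function.Surjective π')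
    (hcentral : π'.ker ≤ Subgroup.center E')
    (hcover : Nonempty (↥(⁅(⊤ : Subgroup E'), (⊤ : Subgroup E')⁆ ⊓ π'.ker) ≃* H2Z G)) :
    Monoid.exponent (FreeProdCyclic m ⧸ ⁅π.ker, (⊤ : Subgroup (FreeProdCyclic m))⁆) ≤
      Monoid.exponent E' := by
  classical
  obtain ⟨cov⟩ := hcover
  set n := Monoid.exponent E' with hn
  have hn0 : 0 < n := Nat.pos_of_ne_zero Monoid.exponent_ne_zero_of_finite
  have hE'n : ∀ a : E', a ^ n = 1 := fun a => Monoid.pow_exponent_eq_one a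
  have hGdvd : Monoid.exponent G ∣ n := MonoidHom.exponent_dvd (f := π') hsurj'
  have hGn : ∀ g : G, g ^ n = 1 := Monoid.exponent_dvd_iff_forall_pow_eq_one.mp hGdvd
  have hmdvd : ∀ i, m i ∣ n := fun i => by
    rw [← hlu i]; exact (Monoid.order_dvd_exponent _).trans hGdvd
  have hmpos : ∀ i, 0 < m i := fun i => by
    rw [← hlu i]; exact orderOf_pos _
  -- homomorphisms from the free group
  set α : FreeGroup (Fin d) →* FreeProdCyclic m :=
    FreeGroup.lift (fun i => cyclicGen m i) with hα
  set ρ : FreeGroup (Fin d) →* G := π.comp α with hρ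
  have hα_of : ∀ i, α (FreeGroup.of i) = cyclicGen m i := fun i => FreeGroup.lift_apply_of
  have hρ_of : ∀ i, ρ (FreeGroup.of i) = π (cyclicGen m i) := fun i => by
    rw [hρ, MonoidHom.comp_apply, hα_of]
  have hcg_pow : ∀ (i : Fin d) (k : ℕ),
      (cyclicGen m i) ^ k = Monoid.CoprodI.of (M := fun j : Fin d => Multiplicative (ZMod (m j)))
        (Multiplicative.ofAdd ((k : ZMod (m i)))) := by
    intro i k
    rw [cyclicGen, ← map_pow]
    congr 1
    rw [← ofAdd_nsmul, nsmul_eq_mul, mul_one]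
  have hcg1 : ∀ i : Fin d, (cyclicGen m i) ^ (m i) = 1 := by
    intro i
    rw [hcg_pow, ZMod.natCast_self, ofAdd_zero, map_one]
  have hcgn : ∀ i : Fin d, (cyclicGen m i) ^ n = 1 := by
    intro i
    obtain ⟨k, hk⟩ := hmdvd i
    rw [hk, pow_mul, hcg1, one_pow]
  have hαsurj : Function.Surjective α := by
    intro y
    induction y using Monoid.CoprodI.induction_left with
    | one => exact ⟨1, map_one α⟩
    | @mul i mi x ih =>
        obtain ⟨yx, hyx⟩ := ih
        haveI : NeZero (m i) := ⟨(hmpos i).ne'⟩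
        refine ⟨FreeGroup.of i ^ (Multiplicative.toAdd mi).val * yx, ?_⟩
        rw [map_mul, map_pow, hα_of, hyx, hcg_pow,
          ZMod.natCast_rightInverse (Multiplicative.toAdd mi), ofAdd_toAdd]
  have hρsurj : Function.Surjective ρ := by
    rw [hρ]; exact hsurj.comp hαsurj
  -- the quotient Q = F̂ / [R̂, F̂]
  set Z : Subgroup (FreeGroup (Fin d)) := ⁅ρ.ker, (⊤ : Subgroup (FreeGroup (Fin d)))⁆ with hZ
  set q : FreeGroup (Fin d) →* FreeGroup (Fin d) ⧸ Z := QuotientGroup.mk' Z with hq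
  have hqsurj : Function.Surjective q := QuotientGroup.mk'_surjective Z
  have hq_eq : ∀ x y : FreeGroup (Fin d), x⁻¹ * y ∈ Z → q x = q y := by
    intro x y hxy
    rw [hq, QuotientGroup.mk'_eq_mk']
    exact ⟨x⁻¹ * y, hxy, by group⟩
  have hq_one : ∀ x : FreeGroup (Fin d), q x = 1 ↔ x ∈ Z := by
    intro x
    rw [hq]
    exact QuotientGroup.eq_one_iff x
  have hcent : ∀ r ∈ ρ.ker, q r ∈ Subgroup.center (FreeGroup (Fin d) ⧸ Z) := by
    intro r hr
    rw [Subgroup.mem_center_iff]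
    intro y
    obtain ⟨f, rfl⟩ := hqsurj y
    rw [← map_mul, ← map_mul]
    apply hq_eq
    have : (f * r)⁻¹ * (r * f) = ⁅r⁻¹, f⁻¹⁆ := by
      rw [commutatorElement_def]; group
    rw [this]
    exact Subgroup.commutator_mem_commutator (Subgroup.inv_mem _ hr) (Subgroup.mem_top _)
  -- the lift θ to E'
  obtain ⟨e, he⟩ : ∃ e : Fin d → E', ∀ i, π' (e i) = π (cyclicGen m i) :=
    ⟨fun i => Classical.choose (hsurj' (π (cyclicGen m i))),
     fun i => Classical.choose_spec (hsurj' (π (cyclicGen m i)))⟩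
  set θ : FreeGroup (Fin d) →* E' := FreeGroup.lift e with hθ
  have hθ_of : ∀ i, θ (FreeGroup.of i) = e i := fun i => FreeGroup.lift_apply_of
  have hπθ : ∀ x, π' (θ x) = ρ x := by
    intro x
    have : π'.comp θ = ρ := by
      apply FreeGroup.ext_hom
      intro i
      rw [MonoidHom.comp_apply, hθ_of, he, hρ_of]
    rw [← this, MonoidHom.comp_apply]
  have hθR : ∀ r ∈ ρ.ker, θ r ∈ π'.ker := by
    intro r hr
    rw [MonoidHom.mem_ker, hπθ]
    exact hr
  have hZθker : Z ≤ θ.ker := by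
    rw [hZ, Subgroup.commutator_le]
    intro r hr f _
    rw [MonoidHom.mem_ker, map_commutatorElement]
    apply commutatorElement_eq_one_iff_commute.mpr
    exact (Subgroup.mem_center_iff.mp (hcentral (hθR r hr)) (θ f)).symm
  set θb : (FreeGroup (Fin d) ⧸ Z) →* E' := QuotientGroup.lift Z θ hZθker with hθb
  have hθbq : ∀ x, θb (q x) = θ x := fun x => rfl
  -- commutator subgroups
  set C : Subgroup (FreeGroup (Fin d)) :=
    ⁅(⊤ : Subgroup (FreeGroup (Fin d))), ⊤⁆ with hC
  set D : Subgroup E' := ⁅(⊤ : Subgroup E'), (⊤ : Subgroup E')⁆ ⊓ π'.ker with hD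
  set M' : Subgroup (FreeGroup (Fin d) ⧸ Z) := (C ⊓ ρ.ker).map q with hM'
  -- θ maps C ⊓ R̂ onto D
  have hθC : Subgroup.map θ C = ⁅(⊤ : Subgroup E'), (⊤ : Subgroup E')⁆ := by
    apply le_antisymm
    · rw [hC, Subgroup.map_commutator]
      exact Subgroup.commutator_mono le_top le_top
    · rw [Subgroup.commutator_le]
      intro a _ b _
      obtain ⟨xa, hxa⟩ := hρsurj (π' a)
      obtain ⟨xb, hxb⟩ := hρsurj (π' b)
      have hza : (θ xa)⁻¹ * a ∈ π'.ker := by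
        rw [MonoidHom.mem_ker, map_mul, map_inv, hπθ, hxa, inv_mul_cancel]
      have hzb : (θ xb)⁻¹ * b ∈ π'.ker := by
        rw [MonoidHom.mem_ker, map_mul, map_inv, hπθ, hxb, inv_mul_cancel]
      have ha : a = θ xa * ((θ xa)⁻¹ * a) := by group
      have hb : b = θ xb * ((θ xb)⁻¹ * b) := by group
      rw [ha, hb, aux_commutator_center _ _ _ _ (hcentral hza) (hcentral hzb),
        ← map_commutatorElement]
      exact Subgroup.mem_map_of_mem θ
        (Subgroup.commutator_mem_commutator (Subgroup.mem_top _) (Subgroup.mem_top _))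
  have hθCR : Subgroup.map θ (C ⊓ ρ.ker) = D := by
    apply le_antisymm
    · rw [hD]
      apply le_inf
      · exact le_trans (Subgroup.map_mono inf_le_left) (le_of_eq hθC)
      · intro y hy
        obtain ⟨x, hx, rfl⟩ := hy
        exact hθR x hx.2
    · intro a ha
      rw [hD] at ha
      have := ha.1
      rw [← hθC] at this
      obtain ⟨c, hc, rfl⟩ := this
      have hcker : c ∈ ρ.ker := by
        rw [MonoidHom.mem_ker, ← hπθ]
        exact MonoidHom.mem_ker.mp ha.2
      exact ⟨c, ⟨hc, hcker⟩, rfl⟩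
  -- maps between the two presentations
  set lam : FreeGroup G →* G := FreeGroup.lift (id : G → G) with hlam
  set β : FreeGroup (Fin d) →* FreeGroup G :=
    FreeGroup.lift (fun i => FreeGroup.of (π (cyclicGen m i))) with hβ
  have hlamβ : ∀ x, lam (β x) = ρ x := by
    intro x
    have : lam.comp β = ρ := by
      apply FreeGroup.ext_hom
      intro i
      simp [hlam, hβ, hρ_of]
    rw [← this, MonoidHom.comp_apply]
  set γ : FreeGroup G →* FreeGroup (Fin d) :=
    FreeGroup.lift (fun g => Classical.choose (hρsurj g)) with hγ
  have hργ_of : ∀ g : G, ρ (γ (FreeGroup.of g)) = g := by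
    intro g
    rw [hγ, FreeGroup.lift_apply_of]
    exact Classical.choose_spec (hρsurj g)
  have hργ : ∀ x, ρ (γ x) = lam x := by
    intro x
    have h : ρ.comp γ = lam := by
      apply FreeGroup.ext_hom
      intro g
      rw [MonoidHom.comp_apply, hργ_of, hlam, FreeGroup.lift_apply_of, id]
    calc ρ (γ x) = (ρ.comp γ) x := rfl
      _ = lam x := by rw [h]
  have hδ : ∀ c ∈ C, q (γ (β c)) = q c := by
    apply aux_center_eq_on_commutator q (γ.comp β)
    intro x
    have hmem : γ (β x) * x⁻¹ ∈ ρ.ker := by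
      rw [MonoidHom.mem_ker, map_mul, map_inv, hργ, hlamβ, mul_inv_cancel]
    have : q (γ (β x)) * (q x)⁻¹ = q (γ (β x) * x⁻¹) := by rw [map_mul, map_inv]
    rw [MonoidHom.comp_apply, this]
    exact hcent _ hmem
  -- subgroups in the canonical presentation
  set RG : Subgroup (FreeGroup G) := MonoidHom.ker lam with hRG
  set CG : Subgroup (FreeGroup G) := ⁅(⊤ : Subgroup (FreeGroup G)), ⊤⁆ with hCG
  have hγR : ∀ x ∈ RG, γ x ∈ ρ.ker := by
    intro x hx
    rw [MonoidHom.mem_ker, hργ]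
    exact hx
  have hγC : ∀ x ∈ CG, γ x ∈ C := by
    intro x hx
    have : Subgroup.map γ CG ≤ C := by
      rw [hCG, Subgroup.map_commutator, hC]
      exact Subgroup.commutator_mono le_top le_top
    exact this (Subgroup.mem_map_of_mem γ hx)
  have hγZ : ∀ z ∈ ⁅RG, (⊤ : Subgroup (FreeGroup G))⁆, γ z ∈ Z := by
    intro z hz
    have : Subgroup.map γ ⁅RG, (⊤ : Subgroup (FreeGroup G))⁆ ≤ Z := by
      rw [Subgroup.map_commutator, hZ]
      apply Subgroup.commutator_mono _ le_top
      intro y hy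
      obtain ⟨x, hx, rfl⟩ := hy
      exact hγR x hx
    exact this (Subgroup.mem_map_of_mem γ hz)
  have hβC : ∀ c ∈ C, β c ∈ CG := by
    intro c hc
    have : Subgroup.map β C ≤ CG := by
      rw [hC, Subgroup.map_commutator, hCG]
      exact Subgroup.commutator_mono le_top le_top
    exact this (Subgroup.mem_map_of_mem β hc)
  have hβR : ∀ c ∈ ρ.ker, β c ∈ RG := by
    intro c hc
    rw [hRG, MonoidHom.mem_ker, hlamβ]
    exact hc
  -- the homomorphism from H2Z G to Q
  set Φ : ↥(CG ⊓ RG) →* FreeGroup (Fin d) ⧸ Z :=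
    (q.comp γ).comp (CG ⊓ RG).subtype with hΦ
  have hΦker : (⁅RG, (⊤ : Subgroup (FreeGroup G))⁆).subgroupOf (CG ⊓ RG) ≤ Φ.ker := by
    intro z hz
    rw [Subgroup.mem_subgroupOf] at hz
    rw [MonoidHom.mem_ker, hΦ, MonoidHom.comp_apply, MonoidHom.comp_apply]
    rw [hq_one]
    exact hγZ _ hz
  set Φb : H2Z G →* FreeGroup (Fin d) ⧸ Z :=
    QuotientGroup.lift _ Φ hΦker with hΦb
  have hΦrange : ∀ h : H2Z G, Φb h ∈ M' := by
    intro h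
    induction h using QuotientGroup.induction_on with
    | H y =>
        have : Φb (QuotientGroup.mk y) = q (γ y.1) := rfl
        rw [this, hM']
        exact Subgroup.mem_map_of_mem q ⟨hγC _ y.2.1, hγR _ y.2.2⟩
  have hΦsurj : ∀ y ∈ M', ∃ h : H2Z G, Φb h = y := by
    intro y hy
    rw [hM'] at hy
    obtain ⟨c, hc, rfl⟩ := hy
    refine ⟨QuotientGroup.mk ⟨β c, hβC c hc.1, hβR c hc.2⟩, ?_⟩
    have : Φb (QuotientGroup.mk (⟨β c, hβC c hc.1, hβR c hc.2⟩ : ↥(CG ⊓ RG)))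
        = q (γ (β c)) := rfl
    rw [this, hδ c hc.1]
  -- finiteness and cardinality
  haveI hfinD : Finite ↥D := by rw [hD]; infer_instance
  haveI hfinH : Finite (H2Z G) := Finite.of_equiv _ cov.toEquiv
  set f : H2Z G → ↥M' := fun h => ⟨Φb h, hΦrange h⟩ with hf
  have hfsurj : Function.Surjective f := by
    rintro ⟨y, hy⟩
    obtain ⟨h, hh⟩ := hΦsurj y hy
    exact ⟨h, Subtype.ext hh⟩
  haveI hfinM : Finite ↥M' := Finite.of_surjective f hfsurj
  have hθbM : ∀ y ∈ M', θb y ∈ D := by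
    intro y hy
    rw [hM'] at hy
    obtain ⟨c, hc, rfl⟩ := hy
    rw [hθbq, ← hθCR]
    exact Subgroup.mem_map_of_mem θ hc
  set g : ↥M' → ↥D := fun y => ⟨θb y.1, hθbM y.1 y.2⟩ with hg
  have hgsurj : Function.Surjective g := by
    rintro ⟨a, ha⟩
    rw [← hθCR] at ha
    obtain ⟨c, hc, rfl⟩ := ha
    refine ⟨⟨q c, Subgroup.mem_map_of_mem q hc⟩, ?_⟩
    apply Subtype.ext
    exact hθbq c
  have hcard : Nat.card ↥M' ≤ Nat.card ↥D := by
    calc Nat.card ↥M' ≤ Nat.card (H2Z G) := Nat.card_le_card_of_surjective f hfsurj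
      _ = Nat.card ↥D := (Nat.card_congr cov.toEquiv).symm
  have hginj : Function.Injective g :=
    (hgsurj.bijective_of_nat_card_le hcard).injective
  have hkey : ∀ y ∈ M', θb y = 1 → y = 1 := by
    intro y hy h1
    have e1 : g ⟨y, hy⟩ = g ⟨1, Subgroup.one_mem M'⟩ := by
      apply Subtype.ext
      rw [hg]
      simp only [map_one]
      exact h1
    have := hginj e1
    exact congrArg Subtype.val this
  -- the main computation
  apply Nat.le_of_dvd hn0
  apply Monoid.exponent_dvd_of_forall_pow_eq_one
  intro x
  obtain ⟨xF, rfl⟩ := QuotientGroup.mk_surjective x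
  obtain ⟨xh, rfl⟩ := hαsurj xF
  set v : Fin d → ℤ := fun i => Multiplicative.toAdd (expv i xh) with hv
  set P : FreeGroup (Fin d) :=
    (List.ofFn (fun i : Fin d => (FreeGroup.of i : FreeGroup (Fin d)) ^ ((n : ℤ) * v i))).prod
    with hP
  set c : FreeGroup (Fin d) := xh ^ n * P⁻¹ with hc
  have hcC : c ∈ C := by
    have habP : Abelianization.of P
        = ∏ i : Fin d, (Abelianization.of (FreeGroup.of i)) ^ ((n : ℤ) * v i) := by
      rw [hP, map_list_prod, List.map_ofFn, ← List.prod_ofFn]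
      congr 1
    have hab : Abelianization.of c = 1 := by
      rw [hc, map_mul, map_inv, map_pow, aux_ab, habP, ← Finset.prod_pow]
      have heq : ∀ i ∈ Finset.univ,
          (Abelianization.of (FreeGroup.of i) ^ (Multiplicative.toAdd (expv i xh))) ^ n
          = Abelianization.of (FreeGroup.of i) ^ ((n : ℤ) * v i) := by
        intro i _
        rw [← zpow_natCast (Abelianization.of (FreeGroup.of i)
          ^ (Multiplicative.toAdd (expv i xh))) n, ← zpow_mul, hv, mul_comm]
      rw [Finset.prod_congr rfl heq, mul_inv_cancel]
    have hmemc : (QuotientGroup.mk c : Abelianization (FreeGroup (Fin d))) = 1 := hab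
    rw [QuotientGroup.eq_one_iff] at hmemc
    rw [hC, ← _root_.commutator_def]
    exact hmemc
  have hρP : ρ P = 1 := by
    rw [hP, map_list_prod, List.map_ofFn]
    apply List.prod_eq_one
    intro x hx
    rw [List.mem_ofFn] at hx
    obtain ⟨i, rfl⟩ := hx
    simp only [Function.comp_apply]
    rw [map_zpow, hρ_of, zpow_mul, zpow_natCast, hGn, one_zpow]
  have hcR : c ∈ ρ.ker := by
    rw [MonoidHom.mem_ker, hc, map_mul, map_inv, map_pow, hρP, inv_one, mul_one, hGn]
  have hθc : θ c = 1 := by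
    rw [hc, map_mul, map_inv, map_pow, hE'n, one_mul, inv_eq_one, hP, map_list_prod,
      List.map_ofFn]
    apply List.prod_eq_one
    intro x hx
    rw [List.mem_ofFn] at hx
    obtain ⟨i, rfl⟩ := hx
    simp only [Function.comp_apply]
    rw [map_zpow, hθ_of, zpow_mul, zpow_natCast, hE'n, one_zpow]
  have hqc : q c = 1 := by
    have hmem : q c ∈ M' := by
      rw [hM']
      exact Subgroup.mem_map_of_mem q ⟨hcC, hcR⟩
    apply hkey _ hmem
    rw [hθbq, hθc]
  have hcZ : c ∈ Z := (hq_one c).mp hqc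
  have hαc : α c ∈ ⁅π.ker, (⊤ : Subgroup (FreeProdCyclic m))⁆ := by
    have hmap : Subgroup.map α Z ≤ ⁅π.ker, (⊤ : Subgroup (FreeProdCyclic m))⁆ := by
      rw [hZ, Subgroup.map_commutator]
      apply Subgroup.commutator_mono _ le_top
      intro y hy
      obtain ⟨r, hr, rfl⟩ := hy
      rw [MonoidHom.mem_ker]
      have : π (α r) = ρ r := by rw [hρ]; rfl
      rw [this]
      exact hr
    exact hmap (Subgroup.mem_map_of_mem α hcZ)
  have hαP : α P = 1 := by
    rw [hP, map_list_prod, List.map_ofFn]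
    apply List.prod_eq_one
    intro x hx
    rw [List.mem_ofFn] at hx
    obtain ⟨i, rfl⟩ := hx
    simp only [Function.comp_apply]
    rw [map_zpow, hα_of, zpow_mul, zpow_natCast, hcgn, one_zpow]
  have hfin : (α xh) ^ n ∈ ⁅π.ker, (⊤ : Subgroup (FreeProdCyclic m))⁆ := by
    have : (α xh) ^ n = α c * α P := by
      rw [← map_mul, hc, inv_mul_cancel_right, map_pow]
    rw [this, hαP, mul_one]
    exact hαc
  rw [← QuotientGroup.mk_pow]
  exact (QuotientGroup.eq_one_iff _).mpr hfin
end

section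
/- Let F = ⟨f₁⟩ ∗ ⋯ ∗ ⟨f_d⟩ be a free product of cyclic groups, let φ : F → A be a surjective homomorphism onto a non-cyclic elementary abelian p-group A, and let K = ker φ. Then for every k ≥ 0 the subgroup [K,_{k+1}F] is properly contained in [K,_kF]. -/
/-- Iterated commutator subgroups: `[R,₀F] = R` and `[R,_{k+1}F] = [[R,_kF],F]`. -/
def iterComm {F : Type*} [Group F] (R : Subgroup F) : ℕ → Subgroup F
  | 0 => R
  | k + 1 => ⁅iterComm R k, (⊤ : Subgroup F)⁆

instance iterComm_normal {F : Type*} [Group F] (R : Subgroup F) [hR : R.Normal] (k : ℕ) :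
    (iterComm R k).Normal := by
  induction k with
  | zero => exact hR
  | succ k ih => exact @Subgroup.commutator_normal _ _ _ _ ih _

open scoped commutatorElement
section AuxiliaryForStatement11

open Multiplicative


/-- The ideal `(Φ_p(X), (X-1)^{k+2})` of `ℤ[X]`. -/
noncomputable def cycIdeal (p k : ℕ) : Ideal (Polynomial ℤ) :=
  Ideal.span {Polynomial.cyclotomic p ℤ, (Polynomial.X - 1) ^ (k + 2)}

/-- The ring `ℤ[ζ_p]/(ζ_p - 1)^{k+2}`. -/
abbrev CycRing (p k : ℕ) : Type := Polynomial ℤ ⧸ cycIdeal p k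

noncomputable def cycZeta (p k : ℕ) : CycRing p k :=
  Ideal.Quotient.mk (cycIdeal p k) Polynomial.X

lemma cyclotomic_mem_cycIdeal (p k : ℕ) : Polynomial.cyclotomic p ℤ ∈ cycIdeal p k :=
  Ideal.subset_span (by simp)

lemma pow_mem_cycIdeal (p k : ℕ) : (Polynomial.X - 1 : Polynomial ℤ) ^ (k + 2) ∈ cycIdeal p k :=
  Ideal.subset_span (by simp)

lemma cycZeta_pow (p k : ℕ) (hp : p.Prime) : cycZeta p k ^ p = 1 := by
  haveI := Fact.mk hp
  have hmem : (Polynomial.X ^ p - 1 : Polynomial ℤ) ∈ cycIdeal p k := by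
    have h1 : (Polynomial.X ^ p - 1 : Polynomial ℤ)
        = Polynomial.cyclotomic p ℤ * (Polynomial.X - 1) := by
      rw [Polynomial.cyclotomic_prime]
      exact (geom_sum_mul (Polynomial.X : Polynomial ℤ) p).symm
    rw [h1]
    exact Ideal.mul_mem_right _ _ (cyclotomic_mem_cycIdeal p k)
  have := Ideal.Quotient.eq_zero_iff_mem.mpr hmem
  rw [map_sub, map_pow, map_one] at this
  rw [sub_eq_zero] at this
  exact this

lemma cycZeta_sum (p k : ℕ) (hp : p.Prime) :
    ∑ i ∈ Finset.range p, cycZeta p k ^ i = 0 := by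
  haveI := Fact.mk hp
  have : ((Ideal.Quotient.mk (cycIdeal p k)) (Polynomial.cyclotomic p ℤ)) = 0 :=
    Ideal.Quotient.eq_zero_iff_mem.mpr (cyclotomic_mem_cycIdeal p k)
  rw [Polynomial.cyclotomic_prime, map_sum] at this
  simpa [cycZeta] using this

lemma cycZeta_sub_one_pow (p k : ℕ) : (cycZeta p k - 1) ^ (k + 2) = 0 := by
  have := Ideal.Quotient.eq_zero_iff_mem.mpr (pow_mem_cycIdeal p k)
  rw [map_pow, map_sub, map_one] at this
  exact this

lemma cycZeta_sub_one_pow_ne (p k : ℕ) (hp : p.Prime) : (cycZeta p k - 1) ^ (k + 1) ≠ 0 := by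
  haveI := Fact.mk hp
  intro h
  have hmem : (Polynomial.X - 1 : Polynomial ℤ) ^ (k + 1) ∈ cycIdeal p k := by
    rw [← Ideal.Quotient.eq_zero_iff_mem]
    rw [map_pow, map_sub, map_one]
    exact h
  rw [cycIdeal, Ideal.mem_span_pair] at hmem
  obtain ⟨a, b, hab⟩ := hmem
  -- pass to the domain ℤ[X]/(Φ_p)
  have hΦ0 : Polynomial.cyclotomic p ℤ ≠ 0 := Polynomial.cyclotomic_ne_zero p ℤ
  have hΦirr : Irreducible (Polynomial.cyclotomic p ℤ) :=
    Polynomial.cyclotomic.irreducible hp.pos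
  haveI hprime : (Ideal.span {Polynomial.cyclotomic p ℤ}).IsPrime :=
    (Ideal.span_singleton_prime hΦ0).mpr hΦirr.prime
  set D := Polynomial ℤ ⧸ Ideal.span {Polynomial.cyclotomic p ℤ}
  set mkD := Ideal.Quotient.mk (Ideal.span {Polynomial.cyclotomic p ℤ})
  set lam : D := mkD (Polynomial.X - 1) with hlam
  have hlam0 : lam ≠ 0 := by
    intro h0
    have hmem' : (Polynomial.X - 1 : Polynomial ℤ) ∈
        Ideal.span {Polynomial.cyclotomic p ℤ} := Ideal.Quotient.eq_zero_iff_mem.mp h0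
    rw [Ideal.mem_span_singleton] at hmem'
    obtain ⟨q, hq⟩ := hmem'
    have := congrArg (Polynomial.eval (2 : ℤ)) hq
    simp only [Polynomial.eval_sub, Polynomial.eval_X, Polynomial.eval_one,
      Polynomial.eval_mul] at this
    have heval : Polynomial.eval (2 : ℤ) (Polynomial.cyclotomic p ℤ) = 2 ^ p - 1 := by
      rw [Polynomial.cyclotomic_prime]
      have := geom_sum_mul (2 : ℤ) p
      simp only [Polynomial.eval_finset_sum, Polynomial.eval_pow, Polynomial.eval_X]
      linarith [geom_sum_mul (2 : ℤ) p]
    rw [heval] at this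
    have hdvd : (2 ^ p - 1 : ℤ) ∣ 1 := Dvd.intro _ this.symm
    have hle : (2 ^ p - 1 : ℤ) ≤ 1 := Int.le_of_dvd one_pos hdvd
    have h4 : (4 : ℤ) ≤ 2 ^ p := by
      calc (4 : ℤ) = 2 ^ 2 := by norm_num
      _ ≤ 2 ^ p := pow_le_pow_right₀ (by norm_num) hp.two_le
    linarith
  have hD := congrArg mkD hab
  simp only [map_add, map_mul, map_pow, map_sub, map_one] at hD
  have hlam' : mkD Polynomial.X - 1 = lam := by rw [hlam, map_sub, map_one]
  rw [hlam'] at hD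
  have hΦ : mkD (Polynomial.cyclotomic p ℤ) = 0 :=
    Ideal.Quotient.eq_zero_iff_mem.mpr (Ideal.subset_span (by simp))
  rw [hΦ, mul_zero, zero_add] at hD
  -- hD : mkD b * lam ^ (k+2) = lam ^ (k+1)
  have hunit : IsUnit lam := by
    have h2 : lam ^ (k + 1) * (mkD b * lam - 1) = 0 := by
      have : mkD b * lam ^ (k + 2) = lam ^ (k + 1) := hD
      ring_nf
      ring_nf at this
      linear_combination this
    rcases mul_eq_zero.mp h2 with h3 | h3
    · exact absurd h3 (pow_ne_zero _ hlam0)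
    · have : mkD b * lam = 1 := by linear_combination h3
      exact IsUnit.of_mul_eq_one _ (by rw [mul_comm] at this; exact this)
  -- evaluate at 1 into ZMod p
  have hker : ∀ a ∈ Ideal.span {Polynomial.cyclotomic p ℤ},
      ((Int.castRingHom (ZMod p)).comp (Polynomial.evalRingHom (1 : ℤ))) a = 0 := by
    intro a ha
    rw [Ideal.mem_span_singleton] at ha
    obtain ⟨q, hq⟩ := ha
    subst hq
    have h1 : Polynomial.eval (1 : ℤ) (Polynomial.cyclotomic p ℤ) = p := by
      rw [Polynomial.cyclotomic_prime]
      simp [Polynomial.eval_finset_sum]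
    simp [h1, ZMod.natCast_self]
  let ev : D →+* ZMod p := Ideal.Quotient.lift _ _ hker
  have hev : ev lam = 0 := by
    have : ev lam = ((Int.castRingHom (ZMod p)).comp
        (Polynomial.evalRingHom (1 : ℤ))) (Polynomial.X - 1) :=
      Ideal.Quotient.lift_mk _ _ _
    rw [this]
    simp
  have := hunit.map ev
  rw [hev] at this
  rw [isUnit_zero_iff] at this
  exact zero_ne_one this

def unitsMulAut (R : Type*) [CommRing R] : Rˣ →* MulAut (Multiplicative R) where
  toFun b :=
    { toFun := fun x => ofAdd ((b : R) * x.toAdd)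
      invFun := fun x => ofAdd (((b⁻¹ : Rˣ) : R) * x.toAdd)
      left_inv := fun x => by simp [← mul_assoc]
      right_inv := fun x => by simp [← mul_assoc]
      map_mul' := fun x y => by simp [mul_add, ofAdd_add] }
  map_one' := by ext x; simp
  map_mul' a b := by ext x; simp [mul_assoc]

@[simp] lemma unitsMulAut_apply {R : Type*} [CommRing R] (b : Rˣ) (x : Multiplicative R) :
    unitsMulAut R b x = ofAdd ((b : R) * x.toAdd) := rfl

abbrev AffGrp (R : Type*) [CommRing R] : Type _ :=
  SemidirectProduct (Multiplicative R) Rˣ (unitsMulAut R)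

namespace AffGrp
variable {R : Type*} [CommRing R]

lemma right_commutator (g h : AffGrp R) : (⁅g, h⁆).right = 1 := by
  have h1 : SemidirectProduct.rightHom ⁅g, h⁆ = ⁅SemidirectProduct.rightHom g,
      SemidirectProduct.rightHom h⁆ := map_commutatorElement _ _ _
  have h2 : ⁅SemidirectProduct.rightHom g, SemidirectProduct.rightHom h⁆ = 1 :=
    commutatorElement_eq_one_iff_commute.mpr (Commute.all _ _)
  exact h1.trans h2

lemma comm_formula (t s : R) (b c : Rˣ) :
    ⁅(⟨ofAdd t, b⟩ : AffGrp R), (⟨ofAdd s, c⟩ : AffGrp R)⁆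
      = ⟨ofAdd (t + (b : R) * s - (c : R) * t - s), 1⟩ := by
  rw [commutatorElement_def]
  ext
  · simp only [SemidirectProduct.mul_left, SemidirectProduct.inv_left,
      SemidirectProduct.mul_right, SemidirectProduct.inv_right, unitsMulAut_apply,
      toAdd_ofAdd, toAdd_mul, toAdd_inv]
    simp only [Units.val_mul, ← ofAdd_add]
    congr 1
    have hb : (b : R) * ((b⁻¹ : Rˣ) : R) = 1 := Units.mul_inv b
    have hc : (c : R) * ((c⁻¹ : Rˣ) : R) = 1 := Units.mul_inv c
    linear_combination ((-1 : R) * (c : R) * t - s * ((c : R) * ((c⁻¹ : Rˣ) : R))) * hb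
      + (-s) * hc
  · rw [← commutatorElement_def]
    simp [right_commutator]

variable (ζ : Rˣ)

def uu : AffGrp R := ⟨ofAdd 0, ζ⟩
def vv : AffGrp R := ⟨ofAdd 1, ζ⟩

lemma comm_uv : ⁅uu ζ, vv ζ⁆ = (⟨ofAdd ((ζ : R) - 1), 1⟩ : AffGrp R) := by
  rw [uu, vv, comm_formula]
  congr 2
  ring

lemma uu_pow (n : ℕ) : (uu ζ) ^ n = (⟨ofAdd 0, ζ ^ n⟩ : AffGrp R) := by
  induction n with
  | zero => ext <;> simp
  | succ n ih =>
      rw [pow_succ, ih, uu]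
      ext
      · simp only [SemidirectProduct.mul_left, unitsMulAut_apply, toAdd_ofAdd]
        simp [← ofAdd_add]
      · show _ * _ = _
        simp [pow_succ]

lemma vv_pow (n : ℕ) :
    (vv ζ) ^ n = (⟨ofAdd (∑ i ∈ Finset.range n, (ζ : R) ^ i), ζ ^ n⟩ : AffGrp R) := by
  induction n with
  | zero => ext <;> simp
  | succ n ih =>
      rw [pow_succ, ih, vv]
      ext
      · simp only [SemidirectProduct.mul_left, unitsMulAut_apply, toAdd_ofAdd]
        rw [Finset.sum_range_succ]
        simp [Units.val_pow_eq_pow_val]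
      · show _ * _ = _
        simp [pow_succ]

/-- Elements whose unit part is congruent to 1 mod (z-1). -/
def SS (z : R) : Subgroup (AffGrp R) where
  carrier := {g | (z - 1) ∣ ((g.right : R) - 1)}
  one_mem' := by simp
  mul_mem' := by
    intro a b ha hb
    simp only [Set.mem_setOf_eq, SemidirectProduct.mul_right, Units.val_mul] at *
    have h : ((a.right : R) * b.right - 1)
        = (a.right : R) * ((b.right : R) - 1) + ((a.right : R) - 1) := by ring
    rw [h]
    exact dvd_add (Dvd.dvd.mul_left hb _) ha
  inv_mem' := by
    intro a ha
    simp only [Set.mem_setOf_eq, SemidirectProduct.inv_right] at *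
    have hb : (a.right : R) * ((a.right⁻¹ : Rˣ) : R) = 1 := Units.mul_inv _
    have h : ((a.right⁻¹ : Rˣ) : R) - 1 = -((a.right⁻¹ : Rˣ) : R) * ((a.right : R) - 1) := by
      linear_combination hb
    rw [h]
    exact Dvd.dvd.mul_left ha _

/-- translations divisible by `(z-1)^j` -/
def TT (z : R) (j : ℕ) : Subgroup (AffGrp R) where
  carrier := {g | g.right = 1 ∧ (z - 1) ^ j ∣ g.left.toAdd}
  one_mem' := by simp
  mul_mem' := by
    intro a b ha hb
    obtain ⟨ha1, ha2⟩ := ha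
    obtain ⟨hb1, hb2⟩ := hb
    refine ⟨by simp [SemidirectProduct.mul_right, ha1, hb1], ?_⟩
    simp only [SemidirectProduct.mul_left, ha1, map_one, MulAut.one_apply, toAdd_mul]
    exact dvd_add ha2 hb2
  inv_mem' := by
    intro a ha
    obtain ⟨ha1, ha2⟩ := ha
    refine ⟨by simp [SemidirectProduct.inv_right, ha1], ?_⟩
    simp only [SemidirectProduct.inv_left, ha1, inv_one, map_one, MulAut.one_apply, toAdd_inv]
    exact Dvd.dvd.neg_right ha2

lemma mem_TT {z : R} {j : ℕ} {g : AffGrp R} :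
    g ∈ TT z j ↔ g.right = 1 ∧ (z - 1) ^ j ∣ g.left.toAdd := Iff.rfl

lemma mem_SS {z : R} {g : AffGrp R} : g ∈ SS z ↔ (z - 1) ∣ ((g.right : R) - 1) := Iff.rfl

lemma comm_mem_TT_zero (z : R) (g h : AffGrp R) : ⁅g, h⁆ ∈ TT z 0 :=
  ⟨right_commutator g h, by simp⟩

lemma comm_mem_TT_succ (z : R) (j : ℕ) (g h : AffGrp R) (hg : g ∈ TT z j) (hh : h ∈ SS z) :
    ⁅g, h⁆ ∈ TT z (j + 1) := by
  obtain ⟨hg1, hg2⟩ := hg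
  obtain ⟨g1, g2⟩ := g
  obtain ⟨h1, h2⟩ := h
  simp only at hg1
  subst hg1
  have key := comm_formula (g1.toAdd) (h1.toAdd) 1 h2
  simp only [ofAdd_toAdd, Units.val_one, one_mul] at key
  rw [key]
  refine ⟨rfl, ?_⟩
  simp only [toAdd_ofAdd]
  have h : toAdd g1 + toAdd h1 - (h2 : R) * toAdd g1 - toAdd h1
      = -(((h2 : R) - 1)) * toAdd g1 := by ring
  rw [h, pow_succ, mul_comm ((z-1)^j)]
  exact mul_dvd_mul (Dvd.dvd.neg_right (mem_SS.mp hh)) hg2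

lemma comm_uu_formula (t : R) :
    ⁅(⟨ofAdd t, 1⟩ : AffGrp R), uu ζ⁆ = (⟨ofAdd ((1 - (ζ : R)) * t), 1⟩ : AffGrp R) := by
  rw [uu, comm_formula]
  congr 2
  ring

end AffGrp



/-- The hom `ℤ → Additive G`, `t ↦ g^t`. -/
def zpowAddHom {G : Type*} [Group G] (g : G) : ℤ →+ Additive G :=
  AddMonoidHom.mk' (fun t => Additive.ofMul (g ^ t)) (by
    intro a b
    simp [zpow_add])

def zpowAddHomSub {G : Type*} [Group G] (n : ℕ) (g : G) (h : g ^ n = 1) :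
    {f : ℤ →+ Additive G // f n = 0} :=
  ⟨zpowAddHom g, by
    simp only [zpowAddHom, AddMonoidHom.mk'_apply, zpow_natCast, h]
    rfl⟩

/-- The hom `Multiplicative (ZMod n) →* G` sending the generator to an element `g`
with `g ^ n = 1`. -/
def zmodPowHom {G : Type*} [Group G] (n : ℕ) (g : G) (h : g ^ n = 1) :
    Multiplicative (ZMod n) →* G :=
  MonoidHom.mk' (fun x => Additive.toMul (ZMod.lift n (zpowAddHomSub n g h) x.toAdd))
    (by
      intro a b
      simp only [toAdd_mul, map_add]
      rfl)

lemma zmodPowHom_gen {G : Type*} [Group G] (n : ℕ) (g : G) (h : g ^ n = 1) :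
    zmodPowHom n g h (ofAdd 1) = g := by
  have h1 : ((1 : ℤ) : ZMod n) = (1 : ZMod n) := by norm_cast
  show Additive.toMul (ZMod.lift n (zpowAddHomSub n g h) (toAdd (ofAdd (1 : ZMod n)))) = g
  rw [toAdd_ofAdd, ← h1, ZMod.lift_coe]
  simp [zpowAddHomSub, zpowAddHom]

lemma zmodPowHom_mem_zpowers {G : Type*} [Group G] (n : ℕ) (g : G) (h : g ^ n = 1)
    (x : Multiplicative (ZMod n)) : zmodPowHom n g h x ∈ Subgroup.zpowers g := by
  obtain ⟨t, ht⟩ := ZMod.intCast_surjective (n := n) x.toAdd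
  show Additive.toMul (ZMod.lift n (zpowAddHomSub n g h) x.toAdd) ∈ _
  rw [← ht, ZMod.lift_coe]
  simp only [zpowAddHomSub, zpowAddHom, AddMonoidHom.mk'_apply, toMul_ofMul]
  exact zpow_mem (Subgroup.mem_zpowers g) t

/-- each generator raised to its order is 1 -/
lemma cyclicGen_pow_order {ι : Type*} (m : ι → ℕ) (i : ι) :
    (cyclicGen m i) ^ (m i) = 1 := by
  rw [cyclicGen, ← map_pow]
  have : (ofAdd (1 : ZMod (m i))) ^ (m i) = ofAdd ((m i) • (1 : ZMod (m i))) := by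
    rw [ofAdd_nsmul]
  rw [this]
  have h2 : (m i) • (1 : ZMod (m i)) = 0 := by
    rw [nsmul_eq_mul, mul_one, ZMod.natCast_self]
  rw [h2]
  simp

/-- The free product of cyclics is generated by the distinguished generators. -/
lemma closure_range_cyclicGen {ι : Type*} (m : ι → ℕ) :
    Subgroup.closure (Set.range (cyclicGen m)) = ⊤ := by
  rw [eq_top_iff]
  intro x hmem
  clear hmem
  induction x using Monoid.CoprodI.induction_on with
  | one => exact one_mem _
  | mul x y hx hy => exact mul_mem hx hy
  | of i xx =>
      obtain ⟨t, ht⟩ := ZMod.intCast_surjective (n := m i) xx.toAdd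
      have hx : (Monoid.CoprodI.of xx : FreeProdCyclic m) = (cyclicGen m i) ^ t := by
        rw [cyclicGen, ← map_zpow]
        congr 1
        rw [← ofAdd_zsmul, zsmul_eq_mul, mul_one, ht, ofAdd_toAdd]
      rw [hx]
      exact zpow_mem (Subgroup.subset_closure (Set.mem_range_self i)) t


/-- `N = ⁅N,⊤⁆` forces `N` to lie in every term of the lower central series. -/
lemma le_lowerCentralSeries_of_commutator_eq {G : Type*} [Group G] {N : Subgroup G}
    (h : ⁅N, (⊤ : Subgroup G)⁆ = N) : ∀ n, N ≤ lowerCentralSeries (⊤ : Subgroup G) n := by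
  intro n
  induction n with
  | zero => exact le_top
  | succ n ih =>
      rw [← h]
      exact Subgroup.commutator_mono ih le_top

end AuxiliaryForStatement11

/-!
STATEMENT 11: Let `F = ⟨f₁⟩ ∗ ⋯ ∗ ⟨f_d⟩` be a free product of cyclic groups, let
`φ : F → A` be a surjective homomorphism onto a non-cyclic elementary abelian `p`-group
`A`, and let `K = ker φ`.  Then for every `k ≥ 0` the subgroup `[K,_{k+1}F]` is properly
contained in `[K,_kF]`.
-/
theorem iterComm_strict_of_elementary_abelian_quotient {d : ℕ} (m : Fin d → ℕ)
    {A : Type*} [CommGroup A] {p : ℕ} (hp : p.Prime)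
    (hA : ∀ a : A, a ^ p = 1) (hnc : ¬ IsCyclic A)
    (φ : FreeProdCyclic m →* A) (hsurj : Function.Surjective φ) :
    ∀ k : ℕ, iterComm φ.ker (k + 1) < iterComm φ.ker k := by
  haveI := Fact.mk hp
  intro k
  -- generation of A by the images of the generators
  have htopA : Subgroup.closure (Set.range (fun l => φ (cyclicGen m l))) = ⊤ := by
    have h1 := MonoidHom.map_closure φ (Set.range (cyclicGen m))
    rw [closure_range_cyclicGen, Subgroup.map_top_of_surjective φ hsurj] at h1
    rw [← Set.range_comp] at h1
    exact h1.symm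
  -- choose two independent generators
  have hex : ∃ i, φ (cyclicGen m i) ≠ 1 := by
    by_contra hno
    push_neg at hno
    have hle : Subgroup.closure (Set.range (fun l => φ (cyclicGen m l))) ≤ ⊥ := by
      rw [Subgroup.closure_le]
      rintro x ⟨l, rfl⟩
      simp [hno l]
    rw [htopA] at hle
    refine hnc ⟨⟨1, fun x => ?_⟩⟩
    have hx : x = 1 := by simpa using hle (Subgroup.mem_top x)
    rw [hx]
    exact Subgroup.mem_zpowers 1
  obtain ⟨i, hi⟩ := hex
  have hexj : ∃ j, φ (cyclicGen m j) ∉ Subgroup.zpowers (φ (cyclicGen m i)) := by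
    by_contra hno
    push_neg at hno
    have hle : Subgroup.closure (Set.range (fun l => φ (cyclicGen m l)))
        ≤ Subgroup.zpowers (φ (cyclicGen m i)) := by
      rw [Subgroup.closure_le]
      rintro x ⟨l, rfl⟩
      exact hno l
    rw [htopA] at hle
    exact hnc ⟨⟨φ (cyclicGen m i), fun x => hle (Subgroup.mem_top x)⟩⟩
  obtain ⟨j, hj⟩ := hexj
  have hij : i ≠ j := fun h => hj (h ▸ Subgroup.mem_zpowers _)
  have hj1 : φ (cyclicGen m j) ≠ 1 := fun h => hj (h ▸ one_mem _)
  -- p divides the relevant orders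
  have hdvd : ∀ l, φ (cyclicGen m l) ≠ 1 → p ∣ m l := by
    intro l hl
    have h1 : (φ (cyclicGen m l)) ^ (m l) = 1 := by
      rw [← map_pow, cyclicGen_pow_order, map_one]
    have h2 : orderOf (φ (cyclicGen m l)) = p := orderOf_eq_prime (hA _) hl
    rw [← h2]
    exact orderOf_dvd_of_pow_eq_one h1
  have hpi : p ∣ m i := hdvd i hi
  have hpj : p ∣ m j := hdvd j hj1
  -- the auxiliary ring and group
  set R := CycRing p k with hRdef
  set z := cycZeta p k with hzdef
  have hzp : z ^ p = 1 := cycZeta_pow p k hp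
  have hζval : z * z ^ (p - 1) = 1 := by
    have h1 : p - 1 + 1 = p := Nat.succ_pred_eq_of_pos hp.pos
    calc z * z ^ (p - 1) = z ^ (p - 1 + 1) := (pow_succ' z (p - 1)).symm
    _ = z ^ p := by rw [h1]
    _ = 1 := hzp
  set ζ : Rˣ := ⟨z, z ^ (p - 1), hζval, by rw [mul_comm] at hζval; exact hζval⟩ with hζdef
  have hζz : (ζ : R) = z := rfl
  have hζp : ζ ^ p = 1 := Units.ext (by rw [Units.val_pow_eq_pow_val]; exact hzp)
  set u : AffGrp R := AffGrp.uu ζ with hudef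
  set v : AffGrp R := AffGrp.vv ζ with hvdef
  have hup : u ^ p = 1 := by
    rw [hudef, AffGrp.uu_pow, hζp]
    ext <;> simp
  have hvp : v ^ p = 1 := by
    rw [hvdef, AffGrp.vv_pow]
    have hs : ∑ t ∈ Finset.range p, ((ζ : R)) ^ t = 0 := by
      rw [hζz]
      exact cycZeta_sum p k hp
    rw [hs, hζp]
    ext <;> simp
  have hu1 : u ^ (m i) = 1 := by
    obtain ⟨cq, hcq⟩ := hpi
    rw [hcq, pow_mul, hup, one_pow]
  have hv1 : v ^ (m j) = 1 := by
    obtain ⟨cq, hcq⟩ := hpj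
    rw [hcq, pow_mul, hvp, one_pow]
  -- component homomorphisms
  set gl : Fin d → AffGrp R := fun l => if l = i then u else if l = j then v else 1
    with hgldef
  have hgl : ∀ l, (gl l) ^ (m l) = 1 := by
    intro l
    by_cases h1 : l = i
    · subst h1
      simp only [hgldef, if_pos rfl]
      exact hu1
    · by_cases h2 : l = j
      · subst h2
        simp only [hgldef, if_neg h1, if_pos rfl]
        exact hv1
      · simp [hgldef, h1, h2]
  set ψ : FreeProdCyclic m →* AffGrp R :=
    Monoid.CoprodI.lift (fun l => zmodPowHom (m l) (gl l) (hgl l)) with hψdef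
  have hψof : ∀ (l : Fin d) (xx : Multiplicative (ZMod (m l))),
      ψ (Monoid.CoprodI.of xx) = zmodPowHom (m l) (gl l) (hgl l) xx := by
    intro l xx
    rw [hψdef]
    exact Monoid.CoprodI.lift_of _ _
  have hψi : ψ (cyclicGen m i) = u := by
    have h0 : cyclicGen m i
        = (Monoid.CoprodI.of (Multiplicative.ofAdd (1 : ZMod (m i))) : FreeProdCyclic m) := rfl
    rw [h0, hψof, zmodPowHom_gen]
    simp [hgldef]
  have hψj : ψ (cyclicGen m j) = v := by
    have h0 : cyclicGen m j
        = (Monoid.CoprodI.of (Multiplicative.ofAdd (1 : ZMod (m j))) : FreeProdCyclic m) := rfl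
    rw [h0, hψof, zmodPowHom_gen]
    simp [hgldef, hij.symm]
  -- the image of ψ lies in SS
  have huS : u ∈ AffGrp.SS z := by
    rw [AffGrp.mem_SS]
    exact dvd_refl _
  have hvS : v ∈ AffGrp.SS z := by
    rw [AffGrp.mem_SS]
    exact dvd_refl _
  have hrange : ∀ f, ψ f ∈ AffGrp.SS z := by
    intro f
    induction f using Monoid.CoprodI.induction_on with
    | one =>
        rw [map_one]
        exact one_mem _
    | mul a b ha hb =>
        rw [map_mul]
        exact mul_mem ha hb
    | of l xx =>
        rw [hψof]
        refine Subgroup.zpowers_le.mpr ?_ (zmodPowHom_mem_zpowers (m l) (gl l) (hgl l) xx)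
        by_cases h1 : l = i
        · subst h1
          simpa [hgldef] using huS
        · by_cases h2 : l = j
          · subst h2
            simpa [hgldef, h1] using hvS
          · simp only [hgldef, if_neg h1, if_neg h2]
            exact one_mem _
  -- the witness elements
  set x := cyclicGen m i with hxdef
  set y := cyclicGen m j with hydef
  set c : ℕ → FreeProdCyclic m := fun l => Nat.rec ⁅x, y⁆ (fun _ cl => ⁅cl, x⁆) l with hcdef
  have hc0 : c 0 = ⁅x, y⁆ := rfl
  have hcs : ∀ l, c (l + 1) = ⁅c l, x⁆ := fun l => rfl
  have hcmem : ∀ l, c l ∈ iterComm φ.ker l := by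
    intro l
    induction l with
    | zero =>
        show ⁅x, y⁆ ∈ φ.ker
        rw [MonoidHom.mem_ker, map_commutatorElement]
        exact commutatorElement_eq_one_iff_commute.mpr (Commute.all _ _)
    | succ l ih =>
        rw [hcs]
        show ⁅c l, x⁆ ∈ ⁅iterComm φ.ker l, ⊤⁆
        exact Subgroup.commutator_mem_commutator ih (Subgroup.mem_top x)
  -- the image of the witness elements
  set r : ℕ → R := fun l => (1 - z) ^ l * (z - 1) with hrdef
  have hψc : ∀ l, ψ (c l) = (⟨Multiplicative.ofAdd (r l), 1⟩ : AffGrp R) := by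
    intro l
    induction l with
    | zero =>
        rw [hc0, map_commutatorElement, hψi, hψj, hudef, hvdef, AffGrp.comm_uv]
        congr 2
        rw [hrdef]
        simp [hζz]
    | succ l ih =>
        rw [hcs, map_commutatorElement, hψi, ih, hudef, AffGrp.comm_uu_formula]
        congr 2
        rw [hrdef]
        simp only [hζz, pow_succ]
        ring
  -- strictness
  have hle : iterComm φ.ker (k + 1) ≤ iterComm φ.ker k := by
    show ⁅iterComm φ.ker k, ⊤⁆ ≤ iterComm φ.ker k
    exact Subgroup.commutator_le_left _ _
  refine lt_of_le_of_ne hle (fun heq => ?_)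
  -- under the equality assumption, iterComm K k lies in every lcs term
  have hN : ∀ jj, iterComm φ.ker k ≤ lowerCentralSeries (⊤ : Subgroup (FreeProdCyclic m)) jj := by
    have hfix : ⁅iterComm φ.ker k, (⊤ : Subgroup (FreeProdCyclic m))⁆ = iterComm φ.ker k := by
      conv_rhs => rw [← heq]
      rfl
    exact le_lowerCentralSeries_of_commutator_eq hfix
  -- images of the lower central series terms land in TT
  have hmap : ∀ jj, Subgroup.map ψ (lowerCentralSeries (⊤ : Subgroup (FreeProdCyclic m)) (jj + 1))
      ≤ AffGrp.TT z jj := by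
    intro jj
    induction jj with
    | zero =>
        have h1 : lowerCentralSeries (⊤ : Subgroup (FreeProdCyclic m)) 1
            = ⁅lowerCentralSeries (⊤ : Subgroup (FreeProdCyclic m)) 0, ⊤⁆ := rfl
        rw [h1, Subgroup.map_commutator, Subgroup.commutator_le]
        intro g1 hg1 g2 hg2
        exact AffGrp.comm_mem_TT_zero z g1 g2
    | succ jj ih =>
        have h1 : lowerCentralSeries (⊤ : Subgroup (FreeProdCyclic m)) (jj + 2)
            = ⁅lowerCentralSeries (⊤ : Subgroup (FreeProdCyclic m)) (jj + 1), ⊤⁆ := rfl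
        rw [h1, Subgroup.map_commutator, Subgroup.commutator_le]
        intro g1 hg1 g2 hg2
        refine AffGrp.comm_mem_TT_succ z jj g1 g2 (ih hg1) ?_
        rw [Subgroup.mem_map] at hg2
        obtain ⟨f, -, rfl⟩ := hg2
        exact hrange f
  -- the contradiction
  have hck : ψ (c k) ∈ AffGrp.TT z (k + 2) :=
    hmap (k + 2) (Subgroup.mem_map_of_mem ψ (hN (k + 3) (hcmem k)))
  rw [AffGrp.mem_TT, hψc k] at hck
  obtain ⟨-, cc, hcc⟩ := hck
  simp only [toAdd_ofAdd] at hcc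
  rw [show ((z : R) - 1) ^ (k + 2) = 0 from cycZeta_sub_one_pow p k, zero_mul] at hcc
  -- hcc : r k = 0, derive (z-1)^(k+1) = 0
  have hfin : (z - 1) ^ (k + 1) = 0 := by
    have h1 : ((-1 : R)) ^ k * r k = (z - 1) ^ (k + 1) := by
      rw [hrdef]
      show ((-1 : R)) ^ k * ((1 - z) ^ k * (z - 1)) = (z - 1) ^ (k + 1)
      rw [← mul_assoc, ← mul_pow]
      have h2 : ((-1 : R)) * (1 - z) = z - 1 := by ring
      rw [h2, ← pow_succ]
    rw [hcc, mul_zero] at h1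
    exact h1.symm
  exact cycZeta_sub_one_pow_ne p k hp hfin
end
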